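/- arXiv:2103.02492 — 4 statements merged into one kernel-verified Lean document; each statement's English description precedes it below -/
import Mathlib

section
/- Let $s$ be a nonnegative real number and $\eta \in (0,1)$. Define the rescaled Chebyshev polynomial $T_{\eta,s}(x) = T_{\lceil s\rceil}\big(\frac{2(1-x)}{1-\eta}-1\big) / T_{\lceil s\rceil}\big(\frac{2}{1-\eta}-1\big)$, where $T_j$ is the degree-$j$ Chebyshev polynomial of the first kind. Then $T_{\eta,s}(0) = 1$, and for every $x$ with $\eta \le x \le 1$ we have $|T_{\eta,s}(x)| \le 2 e^{-2 s \sqrt{\eta}}$. -/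
open Real Polynomial.Chebyshev

/-- Chebyshev T on cosh. -/
lemma T_real_cosh (u : ℝ) (n : ℤ) :
    (Polynomial.Chebyshev.T ℝ n).eval (Real.cosh u) = Real.cosh (n * u) := by
  have h := Polynomial.Chebyshev.T_complex_cos (u * Complex.I) n
  rw [Complex.cos_mul_I] at h
  have h2 : (n : ℂ) * (u * Complex.I) = ((n : ℝ) * u : ℝ) * Complex.I := by push_cast; ring
  rw [h2, Complex.cos_mul_I] at h
  have := Polynomial.Chebyshev.complex_ofReal_eval_T (Real.cosh u) n
  rw [Complex.ofReal_cosh, h, ← Complex.ofReal_cosh] at this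
  exact_mod_cast this

lemma sinh_le_mul_cosh {t : ℝ} (ht : 0 ≤ t) : Real.sinh t ≤ t * Real.cosh t := by
  have hd : ∀ x : ℝ, HasDerivAt (fun t : ℝ => t * Real.cosh t - Real.sinh t)
      (1 * Real.cosh x + x * Real.sinh x - Real.cosh x) x := fun x =>
    ((hasDerivAt_id x).mul (Real.hasDerivAt_cosh x)).sub (Real.hasDerivAt_sinh x)
  have hmono : MonotoneOn (fun t : ℝ => t * Real.cosh t - Real.sinh t) (Set.Ici 0) := by
    apply monotoneOn_of_deriv_nonneg (convex_Ici 0)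
    · exact ((continuous_id.mul Real.continuous_cosh).sub Real.continuous_sinh).continuousOn
    · exact fun x _ => ((hd x).differentiableAt).differentiableWithinAt
    · intro x hx
      rw [(hd x).deriv]
      have hx0 : 0 ≤ x := by
        simp only [interior_Ici, Set.mem_Ioi] at hx; exact hx.le
      nlinarith [Real.sinh_nonneg_iff.2 hx0]
  have := hmono (Set.mem_Ici.2 le_rfl) (Set.mem_Ici.2 ht) ht
  simp only [Real.cosh_zero, Real.sinh_zero, mul_one, zero_mul, sub_zero] at this
  linarith

lemma exp_two_mul_le {t : ℝ} (ht : 0 ≤ t) (ht1 : t < 1) :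
    Real.exp (2 * t) ≤ (1 + t) / (1 - t) := by
  rw [le_div_iff₀ (by linarith)]
  have h := sinh_le_mul_cosh ht
  rw [Real.sinh_eq, Real.cosh_eq] at h
  have he : Real.exp t * Real.exp (-t) = 1 := by
    rw [← Real.exp_add]; simp
  have he2 : Real.exp (2 * t) = Real.exp t * Real.exp t := by
    rw [← Real.exp_add]; ring_nf
  have hpos : 0 < Real.exp t := Real.exp_pos t
  nlinarith [Real.exp_pos (-t)]

/-- The rescaled and shifted Chebyshev polynomial `T_{η,s}`, as a function. -/
noncomputable def chebApprox (η s x : ℝ) : ℝ :=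
  (Polynomial.Chebyshev.T ℝ ⌈s⌉₊).eval (2 * (1 - x) / (1 - η) - 1) /
    (Polynomial.Chebyshev.T ℝ ⌈s⌉₊).eval (2 / (1 - η) - 1)

theorem chebApprox_bound (s : ℝ) (hs : 0 ≤ s) (η : ℝ) (hη : η ∈ Set.Ioo (0 : ℝ) 1) :
    chebApprox η s 0 = 1 ∧
      ∀ x : ℝ, η ≤ x → x ≤ 1 →
        |chebApprox η s x| ≤ 2 * Real.exp (-2 * s * Real.sqrt η) := by
  obtain ⟨hη0, hη1⟩ := hη
  set n : ℕ := ⌈s⌉₊ with hn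
  set t : ℝ := Real.sqrt η with htdef
  have ht0 : 0 < t := Real.sqrt_pos.2 hη0
  have ht1 : t < 1 := by
    rw [htdef, show (1:ℝ) = Real.sqrt 1 by simp]
    exact Real.sqrt_lt_sqrt hη0.le hη1
  have htsq : t ^ 2 = η := Real.sq_sqrt hη0.le
  have hr1 : (0:ℝ) < (1 + t) / (1 - t) := div_pos (by linarith) (by linarith)
  set u : ℝ := Real.log ((1 + t) / (1 - t)) with hudef
  have hu2t : 2 * t ≤ u := (Real.le_log_iff_exp_le hr1).2 (exp_two_mul_le ht0.le ht1)
  have hu0 : 0 ≤ u := le_trans (by linarith) hu2t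
  have hcosh : Real.cosh u = 2 / (1 - η) - 1 := by
    have h1 : (1:ℝ) - t ≠ 0 := by linarith
    have h2 : (1:ℝ) + t ≠ 0 := by linarith
    have h3 : (1:ℝ) - t ^ 2 ≠ 0 := by nlinarith
    rw [hudef, Real.cosh_log hr1, inv_div, ← htsq]
    field_simp
    ring
  -- denominator value
  have hcast : (((n:ℤ)):ℝ) = (n:ℝ) := by push_cast; rfl
  have hD : (Polynomial.Chebyshev.T ℝ (n:ℤ)).eval (2 / (1 - η) - 1) = Real.cosh ((n:ℝ) * u) := by
    rw [← hcosh, _root_.T_real_cosh, hcast]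
  have hns : s ≤ (n : ℝ) := Nat.le_ceil s
  have hDlb : Real.exp (2 * s * t) / 2 ≤ (Polynomial.Chebyshev.T ℝ (n:ℤ)).eval (2 / (1 - η) - 1) := by
    rw [hD]
    have h1 : 2 * s * t ≤ (n : ℝ) * u := by
      calc 2 * s * t ≤ 2 * (n:ℝ) * t := by nlinarith
        _ = (n:ℝ) * (2 * t) := by ring
        _ ≤ (n:ℝ) * u := by
            apply mul_le_mul_of_nonneg_left hu2t (Nat.cast_nonneg n)
    calc Real.exp (2 * s * t) / 2 ≤ Real.exp ((n:ℝ) * u) / 2 := by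
          gcongr
      _ ≤ Real.cosh ((n:ℝ) * u) := by
          rw [Real.cosh_eq]
          have := Real.exp_pos (-((n:ℝ) * u))
          linarith
  have hDpos : 0 < (Polynomial.Chebyshev.T ℝ (n:ℤ)).eval (2 / (1 - η) - 1) :=
    lt_of_lt_of_le (by positivity) hDlb
  constructor
  · have h0 : 2 * (1 - (0:ℝ)) / (1 - η) - 1 = 2 / (1 - η) - 1 := by ring
    unfold chebApprox
    rw [h0]
    exact div_self hDpos.ne'
  · intro x hx1 hx2
    have hden : (0:ℝ) < 1 - η := by linarith
    have harg1 : -1 ≤ 2 * (1 - x) / (1 - η) - 1 := by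
      have : 0 ≤ 2 * (1 - x) / (1 - η) := by
        apply div_nonneg (by linarith) hden.le
      linarith
    have harg2 : 2 * (1 - x) / (1 - η) - 1 ≤ 1 := by
      rw [sub_le_iff_le_add, div_le_iff₀ hden]
      nlinarith
    have hN : |(Polynomial.Chebyshev.T ℝ (n:ℤ)).eval (2 * (1 - x) / (1 - η) - 1)| ≤ 1 := by
      rw [← Real.cos_arccos harg1 harg2, Polynomial.Chebyshev.T_real_cos]
      exact Real.abs_cos_le_one _
    have hexp : 2 * Real.exp (-2 * s * t) = 2 / Real.exp (2 * s * t) := by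
      rw [show -2 * s * t = -(2 * s * t) by ring, Real.exp_neg]
      ring
    unfold chebApprox
    rw [abs_div, abs_of_pos hDpos]
    calc |(Polynomial.Chebyshev.T ℝ (n:ℤ)).eval (2 * (1 - x) / (1 - η) - 1)| /
          (Polynomial.Chebyshev.T ℝ (n:ℤ)).eval (2 / (1 - η) - 1)
        ≤ 1 / (Real.exp (2 * s * t) / 2) := by
          exact div_le_div₀ zero_le_one hN (by positivity) hDlb
      _ = 2 * Real.exp (-2 * s * t) := by rw [hexp]; ring
end

section
/- Let $m$ be a positive integer, $\epsilon \le 1/10$, and let $O_1, \ldots, O_m$ be Hermitian operators on a finite-dimensional Hilbert space, each with all eigenvalues in $[0,\epsilon] \cup \{1\}$. Define $\mathrm{Rob}(O_1,\ldots,O_m) = C^\dagger C$ where $C = B(O_1) B(O_2) \cdots B(O_m)$ and $B(O_j)$ is the projector onto the eigenvalue-$1$ eigenspace of $O_j$. Define $\widetilde{\mathrm{Rob}}(O_1,\ldots,O_m) = \sum_{(i_1+i_1')+\cdots+(i_m+i_m') \le 3m} B_{i_m'}(O_m)\cdots B_{i_1'}(O_1) B_{i_1}(O_1) \cdots B_{i_m}(O_m)$,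 where $B_1(x)=x$, $B_i(x)=x^{i-1}(x-1)$ for $i\ge 2$, and the sum is over tuples of positive integers. Then $\|\widetilde{\mathrm{Rob}}(O_1,\ldots,O_m) - \mathrm{Rob}(O_1,\ldots,O_m)\| \le (10\epsilon)^m$. -/
open Polynomial

/-- `B_1 = X` and `B_i = X^{i-1}(X-1)` for `i ≥ 2`, as complex polynomials. -/
noncomputable def Bpoly (i : ℕ) : Polynomial ℂ := if i = 1 then X else X ^ (i - 1) * (X - 1)

/-- The truncated robust polynomial applied to operators: sum over tuples of positive
integers with total at most `3m` of `B_{i'_m}(O_m)⋯B_{i'_1}(O_1) B_{i_1}(O_1)⋯B_{i_m}(O_m)`. -/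
noncomputable def robTildeOp (m d : ℕ)
    (O : Fin m → (EuclideanSpace ℂ (Fin d) →L[ℂ] EuclideanSpace ℂ (Fin d))) :
    EuclideanSpace ℂ (Fin d) →L[ℂ] EuclideanSpace ℂ (Fin d) :=
  ∑ p ∈ (((Fintype.piFinset fun _ : Fin m => Finset.Icc 1 (3 * m)) ×ˢ
      (Fintype.piFinset fun _ : Fin m => Finset.Icc 1 (3 * m))).filter
      fun p => (∑ k, p.1 k) + (∑ k, p.2 k) ≤ 3 * m),
    ((List.ofFn fun k => Polynomial.aeval (O k) (Bpoly (p.2 k))).reverse.prod) *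
      ((List.ofFn fun k => Polynomial.aeval (O k) (Bpoly (p.1 k))).prod)

section mainlemmas

lemma sum_Bpoly : ∀ (M : ℕ), 1 ≤ M → ∑ n ∈ Finset.Icc 1 M, Bpoly n = X ^ M := by
  intro M
  induction M with
  | zero => omega
  | succ M ih =>
    intro _
    rcases Nat.eq_zero_or_pos M with hM | hM
    · subst hM; simp [Bpoly]
    · rw [Finset.sum_Icc_succ_top (by omega), ih hM, Bpoly, if_neg (by omega)]
      have h : M + 1 - 1 = M := by omega
      rw [h]; ring

lemma norm_ofFn_prod_le {m d : ℕ} (hm : 0 < m)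
    (F : Fin m → (EuclideanSpace ℂ (Fin d) →L[ℂ] EuclideanSpace ℂ (Fin d))) :
    ‖(List.ofFn F).prod‖ ≤ ∏ k, ‖F k‖ := by
  have hne : List.ofFn F ≠ [] := by
    intro h
    have := congrArg List.length h
    simp at this; omega
  calc ‖(List.ofFn F).prod‖ ≤ ((List.ofFn F).map norm).prod := List.norm_prod_le' hne
    _ = (List.ofFn fun k => ‖F k‖).prod := by rw [List.map_ofFn]; rfl
    _ = ∏ k, ‖F k‖ := List.prod_ofFn

lemma norm_ofFn_rev_prod_le {m d : ℕ} (hm : 0 < m)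
    (F : Fin m → (EuclideanSpace ℂ (Fin d) →L[ℂ] EuclideanSpace ℂ (Fin d))) :
    ‖(List.ofFn F).reverse.prod‖ ≤ ∏ k, ‖F k‖ := by
  have hne : (List.ofFn F).reverse ≠ [] := by
    intro h
    have := congrArg List.length h
    simp at this; omega
  calc ‖(List.ofFn F).reverse.prod‖ ≤ ((List.ofFn F).reverse.map norm).prod :=
        List.norm_prod_le' hne
    _ = ((List.ofFn F).map norm).reverse.prod := by rw [List.map_reverse]
    _ = ((List.ofFn F).map norm).prod := List.prod_reverse _
    _ = (List.ofFn fun k => ‖F k‖).prod := by rw [List.map_ofFn]; rfl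
    _ = ∏ k, ‖F k‖ := List.prod_ofFn

lemma final_arith (m : ℕ) (hm : 0 < m) (ε : ℝ) (hε0 : 0 ≤ ε) (hε : ε ≤ 1 / 10) :
    ((m : ℝ) + m) * ε ^ (3 * m) + (3 * ε) ^ (m + 1) * ((3 / 2 : ℝ) ^ m * (3 / 2) ^ m)
      ≤ (10 * ε) ^ m := by
  have hm1 : 1 ≤ m := hm
  have h1 : (3 * ε) ^ (m + 1) * ((3 / 2 : ℝ) ^ m * (3 / 2) ^ m) ≤ (3 / 10) * (10 * ε) ^ m := by
    have e1 : (3 * ε) ^ (m + 1) * ((3 / 2 : ℝ) ^ m * (3 / 2) ^ m)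
        = (3 * ε) * ((3 * ε) * ((3 / 2) * (3 / 2))) ^ m := by
      rw [pow_succ', mul_pow ((3:ℝ)*ε), mul_pow ((3:ℝ)/2)]
      ring
    rw [e1]
    apply mul_le_mul (by linarith) ?_ (by positivity) (by norm_num)
    apply pow_le_pow_left₀ (by positivity)
    nlinarith
  have h2 : ((m : ℝ) + m) * ε ^ (3 * m) ≤ (7 / 10) * (10 * ε) ^ m := by
    have hm100 : (m : ℝ) ≤ 100 ^ m := by
      have := Nat.lt_pow_self (n := m) (by norm_num : 1 < 100)
      calc (m : ℝ) ≤ ((100 ^ m : ℕ) : ℝ) := by exact_mod_cast this.le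
        _ = (100 : ℝ) ^ m := by push_cast; ring
    have hε3 : ε ^ 3 ≤ ε / 100 := by
      have hsq : ε ^ 2 ≤ (1 / 10 : ℝ) ^ 2 := pow_le_pow_left₀ hε0 hε 2
      nlinarith [mul_le_mul_of_nonneg_left hsq hε0]
    calc ((m : ℝ) + m) * ε ^ (3 * m) = ((m : ℝ) + m) * (ε ^ 3) ^ m := by
          rw [← pow_mul]
      _ ≤ ((m : ℝ) + m) * (ε / 100) ^ m := by
          apply mul_le_mul_of_nonneg_left _ (by positivity)
          exact pow_le_pow_left₀ (by positivity) hε3 m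
      _ = ((m : ℝ) + m) / 100 ^ m * ε ^ m := by rw [div_pow]; ring
      _ ≤ 2 * ε ^ m := by
          apply mul_le_mul_of_nonneg_right _ (by positivity)
          rw [div_le_iff₀ (by positivity)]
          nlinarith
      _ ≤ (7 / 10) * (10 * ε) ^ m := by
          rw [mul_pow]
          have h10 : (10 : ℝ) ≤ 10 ^ m := by
            calc (10 : ℝ) = 10 ^ 1 := (pow_one _).symm
              _ ≤ 10 ^ m := pow_le_pow_right₀ (by norm_num) hm1
          nlinarith [pow_nonneg hε0 m]
  linarith

end mainlemmas


/-- norm comparison in EuclideanSpace -/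
lemma eu_norm_le {ι : Type*} [Fintype ι] (u v : EuclideanSpace ℂ ι) (c : ℝ) (hc : 0 ≤ c)
    (h : ∀ i, ‖u i‖ ≤ c * ‖v i‖) : ‖u‖ ≤ c * ‖v‖ := by
  rw [EuclideanSpace.norm_eq, EuclideanSpace.norm_eq, ← Real.sqrt_sq hc,
    ← Real.sqrt_mul (by positivity)]
  apply Real.sqrt_le_sqrt
  rw [Finset.mul_sum]
  apply Finset.sum_le_sum
  intro i _
  calc ‖u i‖ ^ 2 ≤ (c * ‖v i‖) ^ 2 := by
        apply pow_le_pow_left₀ (norm_nonneg _) (h i)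
    _ = c ^ 2 * ‖v i‖ ^ 2 := by ring

lemma diag_norm_le {G : Type*} [NormedAddCommGroup G] [InnerProductSpace ℂ G]
    {ι : Type*} [Fintype ι] (b : OrthonormalBasis ι ℂ G) (T : G →L[ℂ] G) (g : ι → ℂ)
    (hT : ∀ i, T (b i) = g i • b i) {c : ℝ} (hc : 0 ≤ c) (hg : ∀ i, ‖g i‖ ≤ c) :
    ‖T‖ ≤ c := by
  refine ContinuousLinearMap.opNorm_le_bound _ hc fun x => ?_
  have hTx : T x = b.repr.symm (WithLp.toLp 2 (fun i => g i * b.repr x i)) := by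
    conv_lhs => rw [← b.sum_repr x]
    rw [map_sum, ← OrthonormalBasis.sum_repr_symm]
    congr 1
    funext i
    rw [map_smul, hT i, smul_smul, mul_comm]
  rw [hTx, ← b.repr.norm_map x, LinearIsometryEquiv.norm_map]
  exact eu_norm_le _ _ c hc fun i => by
    show ‖g i * (b.repr x) i‖ ≤ c * ‖(b.repr x) i‖
    rw [norm_mul]
    exact mul_le_mul_of_nonneg_right (hg i) (norm_nonneg _)

lemma eig_mem_spectrum {G : Type*} [NormedAddCommGroup G] [NormedSpace ℂ G]
    (T : G →L[ℂ] G) (μ : ℂ) (v : G) (hv : v ≠ 0) (hTv : T v = μ • v) :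
    μ ∈ spectrum ℂ T := by
  rw [spectrum.mem_iff]
  intro hU
  obtain ⟨u, hu⟩ := hU
  have h0 : (algebraMap ℂ (G →L[ℂ] G) μ - T) v = 0 := by
    simp [ContinuousLinearMap.sub_apply, hTv, Algebra.algebraMap_eq_smul_one]
  apply hv
  have := congrArg (fun (S : G →L[ℂ] G) => S v) u.inv_mul
  simp only [ContinuousLinearMap.mul_apply, hu, h0, map_zero,
    ContinuousLinearMap.one_apply] at this
  exact this.symm



lemma sum_Bpoly' : ∀ (M : ℕ), 1 ≤ M →
    ∑ n ∈ Finset.Icc 1 M, (if n = 1 then (X : Polynomial ℂ) else X ^ (n - 1) * (X - 1)) = X ^ M := by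
  intro M
  induction M with
  | zero => omega
  | succ M ih =>
    intro _
    rcases Nat.eq_zero_or_pos M with hM | hM
    · subst hM; simp
    · rw [Finset.sum_Icc_succ_top (by omega), ih hM, if_neg (by omega)]
      have : M + 1 - 1 = M := by omega
      rw [this]; ring

lemma sum_piFinset_cons {M : Type*} [AddCommMonoid M] {n : ℕ} (t : Fin (n + 1) → Finset ℕ)
    (g : (Fin (n + 1) → ℕ) → M) :
    ∑ p ∈ Fintype.piFinset t, g p
      = ∑ x ∈ t 0, ∑ q ∈ Fintype.piFinset (fun i => t i.succ), g (Fin.cons x q) := by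
  rw [← Finset.sum_product']
  apply Finset.sum_nbij' (i := fun p => (p 0, Fin.tail p)) (j := fun z => Fin.cons z.1 z.2)
  · intro p hp
    simp only [Fintype.mem_piFinset] at hp
    simp only [Finset.mem_product, Fintype.mem_piFinset]
    exact ⟨hp 0, fun i => hp i.succ⟩
  · intro z hz
    simp only [Finset.mem_product, Fintype.mem_piFinset] at hz
    simp only [Fintype.mem_piFinset]
    intro i
    refine Fin.cases ?_ ?_ i
    · simpa using hz.1
    · intro j; simpa using hz.2 j
  · intro p _; exact Fin.cons_self_tail p
  · intro z _; simp [Fin.tail_cons]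
  · intro p _; rw [Fin.cons_self_tail]

lemma ofFn_prod_sum {R : Type*} [Semiring R] :
    ∀ {n : ℕ} (t : Fin n → Finset ℕ) (f : Fin n → ℕ → R),
    ∑ p ∈ Fintype.piFinset t, (List.ofFn fun k => f k (p k)).prod
      = (List.ofFn fun k => ∑ i ∈ t k, f k i).prod := by
  intro n
  induction n with
  | zero =>
    intro t f
    simp [List.ofFn_zero]
  | succ n ih =>
    intro t f
    rw [sum_piFinset_cons]
    rw [List.ofFn_succ, List.prod_cons, Finset.sum_mul]
    apply Finset.sum_congr rfl
    intro x _
    rw [← ih (fun i => t i.succ) (fun i => f i.succ), Finset.mul_sum]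
    apply Finset.sum_congr rfl
    intro q _
    rw [List.ofFn_succ, List.prod_cons]
    simp [Fin.cons_zero, Fin.cons_succ]

lemma ofFn_rev_prod_sum {R : Type*} [Semiring R] :
    ∀ {n : ℕ} (t : Fin n → Finset ℕ) (f : Fin n → ℕ → R),
    ∑ p ∈ Fintype.piFinset t, (List.ofFn fun k => f k (p k)).reverse.prod
      = (List.ofFn fun k => ∑ i ∈ t k, f k i).reverse.prod := by
  intro n
  induction n with
  | zero =>
    intro t f
    simp [List.ofFn_zero]
  | succ n ih =>
    intro t f
    rw [sum_piFinset_cons]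
    rw [List.ofFn_succ, List.reverse_cons, List.prod_append, List.prod_cons, List.prod_nil,
      mul_one, Finset.mul_sum]
    apply Finset.sum_congr rfl
    intro x _
    rw [← ih (fun i => t i.succ) (fun i => f i.succ), Finset.sum_mul]
    apply Finset.sum_congr rfl
    intro q _
    rw [List.ofFn_succ, List.reverse_cons, List.prod_append, List.prod_cons, List.prod_nil,
      mul_one]
    simp [Fin.cons_zero, Fin.cons_succ]

lemma star_list_prod {R : Type*} [Monoid R] [StarMul R] :
    ∀ (l : List R), (∀ x ∈ l, star x = x) → star l.prod = l.reverse.prod := by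
  intro l
  induction l with
  | nil => simp
  | cons a l ih =>
    intro h
    rw [List.prod_cons, star_mul, ih (fun x hx => h x (List.mem_cons_of_mem a hx)),
      h a (List.mem_cons_self), List.reverse_cons, List.prod_append, List.prod_cons,
      List.prod_nil, mul_one]

lemma prod_map_norm_le_one {ι R : Type*} [NormedRing R] (h1 : ‖(1 : R)‖ ≤ 1) (f : ι → R) :
    ∀ (J : List ι), (∀ i ∈ J, ‖f i‖ ≤ 1) → ‖(J.map f).prod‖ ≤ 1 := by
  intro J
  induction J with
  | nil => simpa using h1
  | cons a J ih =>
    intro h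
    rw [List.map_cons, List.prod_cons]
    calc ‖f a * (J.map f).prod‖ ≤ ‖f a‖ * ‖(J.map f).prod‖ := norm_mul_le _ _
      _ ≤ 1 * 1 := by
          apply mul_le_mul (h a (List.mem_cons_self))
            (ih fun i hi => h i (List.mem_cons_of_mem a hi)) (norm_nonneg _) zero_le_one
      _ = 1 := by ring

lemma prod_map_sub_le {ι R : Type*} [NormedRing R] (h1 : ‖(1 : R)‖ ≤ 1) (δ : ℝ) (hδ : 0 ≤ δ)
    (f g : ι → R) : ∀ (J : List ι),
    (∀ i ∈ J, ‖f i‖ ≤ 1 ∧ ‖g i‖ ≤ 1 ∧ ‖f i - g i‖ ≤ δ) →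
    ‖(J.map f).prod - (J.map g).prod‖ ≤ J.length * δ := by
  intro J
  induction J with
  | nil => simp
  | cons a J ih =>
    intro h
    have hf1 : ∀ i ∈ J, ‖f i‖ ≤ 1 := fun i hi => (h i (List.mem_cons_of_mem a hi)).1
    have hg1 : ∀ i ∈ J, ‖g i‖ ≤ 1 := fun i hi => (h i (List.mem_cons_of_mem a hi)).2.1
    have ha := h a (List.mem_cons_self)
    rw [List.map_cons, List.prod_cons, List.map_cons, List.prod_cons]
    have key : f a * (J.map f).prod - g a * (J.map g).prod
        = (f a - g a) * (J.map f).prod + g a * ((J.map f).prod - (J.map g).prod) := by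
      noncomm_ring
    rw [key]
    calc ‖(f a - g a) * (J.map f).prod + g a * ((J.map f).prod - (J.map g).prod)‖
        ≤ ‖(f a - g a) * (J.map f).prod‖ + ‖g a * ((J.map f).prod - (J.map g).prod)‖ :=
          norm_add_le _ _
      _ ≤ ‖f a - g a‖ * ‖(J.map f).prod‖ + ‖g a‖ * ‖(J.map f).prod - (J.map g).prod‖ := by
          gcongr <;> exact norm_mul_le _ _
      _ ≤ δ * 1 + 1 * (J.length * δ) := by
          apply add_le_add
          · exact mul_le_mul ha.2.2 (prod_map_norm_le_one h1 f J hf1) (norm_nonneg _) hδ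
          · exact mul_le_mul ha.2.1 (ih fun i hi => h i (List.mem_cons_of_mem a hi))
              (norm_nonneg _) zero_le_one
      _ = (↑J.length + 1) * δ := by ring
      _ = ↑(a :: J).length * δ := by push_cast [List.length_cons]; ring
    
lemma geom_third (M : ℕ) :
    ∑ n ∈ Finset.Icc 1 M, ((3 : ℝ)⁻¹) ^ (n - 1) ≤ 3 / 2 - (3 / 2) * (3⁻¹ : ℝ) ^ M := by
  induction M with
  | zero => simp
  | succ M ih =>
    rw [Finset.sum_Icc_succ_top (by omega)]
    have h : ((3 : ℝ)⁻¹) ^ (M + 1 - 1) = (3⁻¹ : ℝ) ^ M := by norm_num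
    rw [h]
    have : (3 / 2 : ℝ) * (3⁻¹ : ℝ) ^ (M + 1) = (1 / 2) * (3⁻¹ : ℝ) ^ M := by
      rw [pow_succ]; ring
    rw [this]
    linarith [ih]


section opfacts

variable {d : ℕ}

local notation "Hd" => EuclideanSpace ℂ (Fin d)

lemma op_facts (ε : ℝ) (hε0 : 0 ≤ ε) (hε : ε ≤ 1 / 10) (T : Hd →L[ℂ] Hd)
    (hT : IsSelfAdjoint T)
    (hspec : ∀ μ : ℝ, (μ : ℂ) ∈ spectrum ℂ T → μ ∈ Set.Icc 0 ε ∪ {1})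
    (B : Hd →L[ℂ] Hd) (hB1 : IsIdempotentElem B) (hB2 : IsSelfAdjoint B)
    (hB3 : LinearMap.range ((B : Hd →ₗ[ℂ] Hd)) = Module.End.eigenspace ((T : Hd →ₗ[ℂ] Hd)) 1) :
    (∀ n, 1 ≤ n → ‖Polynomial.aeval T (Bpoly n)‖ ≤ ε ^ (n - 1)) ∧ ‖B‖ ≤ 1 ∧
      ∀ M : ℕ, ‖T ^ M - B‖ ≤ ε ^ M := by
  classical
  have hrank : Module.finrank ℂ Hd = d := finrank_euclideanSpace_fin
  have hsym : LinearMap.IsSymmetric ((T : Hd →ₗ[ℂ] Hd)) := hT.isSymmetric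
  set b : OrthonormalBasis (Fin d) ℂ Hd := hsym.eigenvectorBasis hrank with hb
  set μ : Fin d → ℝ := hsym.eigenvalues hrank with hμdef
  have hdiag : ∀ i, T (b i) = (μ i : ℂ) • b i := fun i =>
    hsym.apply_eigenvectorBasis hrank i
  have hμ : ∀ i, μ i ∈ Set.Icc 0 ε ∪ {1} := by
    intro i
    refine hspec (μ i) (eig_mem_spectrum T _ (b i) ?_ (hdiag i))
    exact b.toBasis.ne_zero i
  have hpow : ∀ (j : ℕ) i, (T ^ j) (b i) = ((μ i : ℂ) ^ j) • b i := by
    intro j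
    induction j with
    | zero => intro i; simp
    | succ j ih =>
      intro i
      rw [pow_succ, ContinuousLinearMap.mul_apply, hdiag i, map_smul, ih i, smul_smul,
        pow_succ]
      ring_nf
  -- B is diagonal
  have hBB : ∀ x, B (B x) = B x := by
    intro x
    rw [← ContinuousLinearMap.mul_apply, hB1]
  have hBdiag : ∀ i, B (b i) = (if μ i = 1 then (1 : ℂ) else 0) • b i := by
    intro i
    by_cases h1 : μ i = 1
    · rw [if_pos h1, one_smul]
      have hmem : b i ∈ Module.End.eigenspace ((T : Hd →ₗ[ℂ] Hd)) 1 := by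
        rw [Module.End.mem_eigenspace_iff]
        simpa [h1] using hdiag i
      rw [← hB3] at hmem
      obtain ⟨z, hz⟩ := hmem
      simp only [ContinuousLinearMap.coe_coe] at hz
      rw [← hz]
      exact hBB z
    · rw [if_neg h1, zero_smul]
      have hwmem : B (b i) ∈ Module.End.eigenspace ((T : Hd →ₗ[ℂ] Hd)) 1 := by
        rw [← hB3]; exact ⟨b i, rfl⟩
      have hTw : T (B (b i)) = B (b i) := by
        rw [Module.End.mem_eigenspace_iff] at hwmem
        simpa using hwmem
      have hvw : inner ℂ (b i) (B (b i)) = (0 : ℂ) := by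
        have h := hsym (b i) (B (b i))
        simp only [ContinuousLinearMap.coe_coe] at h
        rw [hdiag i, hTw, inner_smul_left, Complex.conj_ofReal] at h
        have hne : ((μ i : ℂ)) - 1 ≠ 0 := by
          intro hc
          apply h1
          have : ((μ i : ℂ)) = 1 := by linear_combination hc
          exact_mod_cast this
        have hz : (((μ i : ℂ)) - 1) * inner ℂ (b i) (B (b i)) = 0 := by
          rw [sub_mul, one_mul, h, sub_self]
        rcases mul_eq_zero.mp hz with h' | h'
        · exact absurd h' hne
        · exact h'
      have hww : inner ℂ (B (b i)) (B (b i)) = (0 : ℂ) := by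
        have hsymB : LinearMap.IsSymmetric ((B : Hd →ₗ[ℂ] Hd)) := hB2.isSymmetric
        have h := hsymB (b i) (B (b i))
        simp only [ContinuousLinearMap.coe_coe] at h
        rw [hBB] at h
        rw [← h] at hvw
        exact hvw
      rw [inner_self_eq_zero] at hww
      exact hww
  have habs : ∀ i, ‖((μ i : ℂ))‖ ≤ 1 := by
    intro i
    rcases hμ i with h | h
    · rw [Complex.norm_real, Real.norm_eq_abs]
      rw [Set.mem_Icc] at h
      rw [abs_of_nonneg h.1]; linarith
    · rw [Set.mem_singleton_iff.mp h]; norm_num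
  refine ⟨?_, ?_, ?_⟩
  · intro n hn
    by_cases h1 : n = 1
    · subst h1
      have hA1 : Polynomial.aeval T (Bpoly 1) = T := by simp [Bpoly]
      rw [hA1, show (1 : ℕ) - 1 = 0 from rfl, pow_zero]
      exact diag_norm_le b T (fun i => (μ i : ℂ)) hdiag zero_le_one habs
    · have h2 : 2 ≤ n := by omega
      have hAeq : Polynomial.aeval T (Bpoly n) = T ^ (n - 1) * (T - 1) := by
        simp [Bpoly, if_neg h1]
      rw [hAeq]
      have hdiag' : ∀ i, (T ^ (n - 1) * (T - 1)) (b i)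
          = ((μ i : ℂ) ^ (n - 1) * ((μ i : ℂ) - 1)) • b i := by
        intro i
        rw [ContinuousLinearMap.mul_apply, ContinuousLinearMap.sub_apply,
          ContinuousLinearMap.one_apply, hdiag i,
          show (μ i : ℂ) • b i - b i = ((μ i : ℂ) - 1) • b i by rw [sub_smul, one_smul],
          map_smul, hpow, smul_smul, mul_comm]
      apply diag_norm_le b _ _ hdiag' (by positivity)
      intro i
      rcases hμ i with h | h
      · rw [Set.mem_Icc] at h
        rw [norm_mul, norm_pow, Complex.norm_real, Real.norm_eq_abs]
        have h3 : ((μ i : ℂ)) - 1 = (((μ i - 1 : ℝ)) : ℂ) := by push_cast; ring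
        rw [h3, Complex.norm_real, Real.norm_eq_abs]
        calc |μ i| ^ (n - 1) * |μ i - 1| ≤ ε ^ (n - 1) * 1 := by
              apply mul_le_mul _ _ (abs_nonneg _) (by positivity)
              · apply pow_le_pow_left₀ (abs_nonneg _)
                rw [abs_of_nonneg h.1]; exact h.2
              · rw [abs_of_nonpos (by linarith)]; linarith
          _ = ε ^ (n - 1) := by ring
      · rw [Set.mem_singleton_iff.mp h]
        have hz : ((1 : ℝ) : ℂ) ^ (n - 1) * (((1 : ℝ) : ℂ) - 1) = 0 := by push_cast; ring
        rw [hz, norm_zero]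
        positivity
  · apply diag_norm_le b B _ hBdiag zero_le_one
    intro i
    by_cases h1 : μ i = 1 <;> simp [h1]
  · intro M
    have hdiag' : ∀ i, (T ^ M - B) (b i)
        = ((μ i : ℂ) ^ M - (if μ i = 1 then (1 : ℂ) else 0)) • b i := by
      intro i
      rw [ContinuousLinearMap.sub_apply, hpow, hBdiag, ← sub_smul]
    apply diag_norm_le b _ _ hdiag' (by positivity)
    intro i
    by_cases h1 : μ i = 1
    · rw [if_pos h1, h1]
      norm_num
      positivity
    · rcases hμ i with h | h
      · rw [Set.mem_Icc] at h
        rw [if_neg h1, sub_zero, norm_pow, Complex.norm_real, Real.norm_eq_abs]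
        apply pow_le_pow_left₀ (abs_nonneg _)
        rw [abs_of_nonneg h.1]; exact h.2
      · exact absurd (Set.mem_singleton_iff.mp h) h1

end opfacts



theorem robTildeOp_close (m d : ℕ) (hm : 0 < m) (ε : ℝ) (hε0 : 0 ≤ ε) (hε : ε ≤ 1 / 10)
    (O : Fin m → (EuclideanSpace ℂ (Fin d) →L[ℂ] EuclideanSpace ℂ (Fin d)))
    (hO : ∀ k, IsSelfAdjoint (O k))
    (hspec : ∀ k, ∀ μ : ℝ, (μ : ℂ) ∈ spectrum ℂ (O k) → μ ∈ Set.Icc 0 ε ∪ {1})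
    (B : Fin m → (EuclideanSpace ℂ (Fin d) →L[ℂ] EuclideanSpace ℂ (Fin d)))
    (hB1 : ∀ k, IsIdempotentElem (B k)) (hB2 : ∀ k, IsSelfAdjoint (B k))
    (hB3 : ∀ k, LinearMap.range
        ((B k : EuclideanSpace ℂ (Fin d) →ₗ[ℂ] EuclideanSpace ℂ (Fin d))) =
      Module.End.eigenspace
        ((O k : EuclideanSpace ℂ (Fin d) →ₗ[ℂ] EuclideanSpace ℂ (Fin d))) 1) :
    ‖robTildeOp m d O -
        ContinuousLinearMap.adjoint ((List.ofFn fun k => B k).prod) *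
          (List.ofFn fun k => B k).prod‖ ≤ (10 * ε) ^ m := by
  have h3m : 1 ≤ 3 * m := by omega
  set boxp := Fintype.piFinset fun _ : Fin m => Finset.Icc 1 (3 * m) with hboxp
  have hfacts := fun k =>
    op_facts ε hε0 hε (O k) (hO k) (hspec k) (B k) (hB1 k) (hB2 k) (hB3 k)
  have hAnorm : ∀ k n, 1 ≤ n → ‖Polynomial.aeval (O k) (Bpoly n)‖ ≤ ε ^ (n - 1) :=
    fun k => (hfacts k).1
  have hBle : ∀ k, ‖B k‖ ≤ 1 := fun k => (hfacts k).2.1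
  have hOMB : ∀ k, ‖O k ^ (3 * m) - B k‖ ≤ ε ^ (3 * m) := fun k => (hfacts k).2.2 (3 * m)
  have hO1 : ∀ k, ‖O k‖ ≤ 1 := by
    intro k
    have h := hAnorm k 1 le_rfl
    rw [show Polynomial.aeval (O k) (Bpoly 1) = O k by simp [Bpoly],
      show (1 : ℕ) - 1 = 0 from rfl, pow_zero] at h
    exact h
  have hOM1 : ∀ k, ‖O k ^ (3 * m)‖ ≤ 1 := by
    intro k
    calc ‖O k ^ (3 * m)‖ ≤ ‖O k‖ ^ (3 * m) := norm_pow_le' _ (by omega)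
      _ ≤ 1 := pow_le_one₀ (norm_nonneg _) (hO1 k)
  have hCLM1 : ‖(1 : EuclideanSpace ℂ (Fin d) →L[ℂ] EuclideanSpace ℂ (Fin d))‖ ≤ 1 := by
    rw [ContinuousLinearMap.one_def]; exact ContinuousLinearMap.norm_id_le
  have hsumA : ∀ k, ∑ n ∈ Finset.Icc 1 (3 * m), Polynomial.aeval (O k) (Bpoly n)
      = O k ^ (3 * m) := by
    intro k
    calc ∑ n ∈ Finset.Icc 1 (3 * m), Polynomial.aeval (O k) (Bpoly n)
        = Polynomial.aeval (O k) (∑ n ∈ Finset.Icc 1 (3 * m), Bpoly n) := by rw [map_sum]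
      _ = Polynomial.aeval (O k) ((X : Polynomial ℂ) ^ (3 * m)) := by rw [sum_Bpoly _ h3m]
      _ = O k ^ (3 * m) := by rw [map_pow, Polynomial.aeval_X]
  have hfun : (fun k : Fin m => ∑ n ∈ Finset.Icc 1 (3 * m), Polynomial.aeval (O k) (Bpoly n))
      = fun k => O k ^ (3 * m) := funext hsumA
  have hLsum : ∑ a ∈ boxp, (List.ofFn fun k => Polynomial.aeval (O k) (Bpoly (a k))).prod
      = (List.ofFn fun k => O k ^ (3 * m)).prod := by
    rw [hboxp, ofFn_prod_sum (fun _ => Finset.Icc 1 (3 * m))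
      (fun k n => Polynomial.aeval (O k) (Bpoly n)), hfun]
  have hRsum : ∑ a ∈ boxp,
      (List.ofFn fun k => Polynomial.aeval (O k) (Bpoly (a k))).reverse.prod
      = (List.ofFn fun k => O k ^ (3 * m)).reverse.prod := by
    rw [hboxp, ofFn_rev_prod_sum (fun _ => Finset.Icc 1 (3 * m))
      (fun k n => Polynomial.aeval (O k) (Bpoly n)), hfun]
  set F := (List.ofFn fun k => O k ^ (3 * m)).reverse.prod *
    (List.ofFn fun k => O k ^ (3 * m)).prod with hFdef
  have hbox : ∑ p ∈ boxp ×ˢ boxp,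
      (List.ofFn fun k => Polynomial.aeval (O k) (Bpoly (p.2 k))).reverse.prod *
        (List.ofFn fun k => Polynomial.aeval (O k) (Bpoly (p.1 k))).prod = F := by
    rw [Finset.sum_product, Finset.sum_comm]
    have hinner : ∀ b ∈ boxp, ∑ a ∈ boxp,
        (List.ofFn fun k => Polynomial.aeval (O k) (Bpoly (b k))).reverse.prod *
          (List.ofFn fun k => Polynomial.aeval (O k) (Bpoly (a k))).prod
        = (List.ofFn fun k => Polynomial.aeval (O k) (Bpoly (b k))).reverse.prod *
          (List.ofFn fun k => O k ^ (3 * m)).prod := by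
      intro b _
      rw [← Finset.mul_sum, hLsum]
    rw [Finset.sum_congr rfl hinner, ← Finset.sum_mul, hRsum]
  have hCC : ContinuousLinearMap.adjoint ((List.ofFn fun k => B k).prod)
      = (List.ofFn fun k => B k).reverse.prod := by
    rw [← ContinuousLinearMap.star_eq_adjoint]
    apply star_list_prod
    intro x hx
    rw [List.mem_ofFn] at hx
    obtain ⟨i, rfl⟩ := hx
    exact hB2 i
  have e0 : ∀ (G : Fin m → (EuclideanSpace ℂ (Fin d) →L[ℂ] EuclideanSpace ℂ (Fin d))),
      (List.ofFn G).reverse.prod * (List.ofFn G).prod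
        = ((((List.finRange m).reverse ++ List.finRange m)).map G).prod := by
    intro G
    rw [List.map_append, List.prod_append, List.map_reverse, ← List.ofFn_eq_map]
  have htel : ‖F - (List.ofFn fun k => B k).reverse.prod * (List.ofFn fun k => B k).prod‖
      ≤ ((m : ℝ) + m) * ε ^ (3 * m) := by
    rw [hFdef, e0 (fun k => O k ^ (3 * m)), e0 B]
    have hlen : ((List.finRange m).reverse ++ List.finRange m).length = m + m := by simp
    have := prod_map_sub_le hCLM1 (ε ^ (3 * m)) (by positivity) (fun k => O k ^ (3 * m)) B
      ((List.finRange m).reverse ++ List.finRange m)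
      (fun i _ => ⟨hOM1 i, hBle i, hOMB i⟩)
    rw [hlen] at this
    calc ‖_ - _‖ ≤ ((m + m : ℕ) : ℝ) * ε ^ (3 * m) := this
      _ = ((m : ℝ) + m) * ε ^ (3 * m) := by push_cast; ring
  set bad := ∑ p ∈ (boxp ×ˢ boxp).filter
      (fun p => ¬((∑ k, p.1 k) + (∑ k, p.2 k) ≤ 3 * m)),
    (List.ofFn fun k => Polynomial.aeval (O k) (Bpoly (p.2 k))).reverse.prod *
      (List.ofFn fun k => Polynomial.aeval (O k) (Bpoly (p.1 k))).prod with hbaddef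
  have hsplit : robTildeOp m d O = F - bad := by
    rw [robTildeOp, hbaddef]
    rw [eq_sub_iff_add_eq]
    rw [Finset.sum_filter_add_sum_filter_not (boxp ×ˢ boxp)
      (fun p => (∑ k, p.1 k) + (∑ k, p.2 k) ≤ 3 * m)]
    exact hbox
  -- key exponential bound
  have hkey : ∀ e : ℕ, m + 1 ≤ e → ε ^ e ≤ (3 * ε) ^ (m + 1) * ((3 : ℝ)⁻¹) ^ e := by
    intro e he
    obtain ⟨r, rfl⟩ := Nat.exists_eq_add_of_le he
    have h9 : ((3 : ℝ) * ε) * 3⁻¹ = ε := by field_simp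
    have hrw : (3 * ε) ^ (m + 1) * ((3 : ℝ)⁻¹) ^ (m + 1 + r)
        = ε ^ (m + 1) * ((3 : ℝ)⁻¹) ^ r := by
      rw [pow_add ((3 : ℝ)⁻¹) (m + 1) r, ← mul_assoc, ← mul_pow, h9]
    rw [hrw, pow_add]
    apply mul_le_mul_of_nonneg_left _ (by positivity)
    apply pow_le_pow_left₀ hε0
    rw [show ((3 : ℝ)⁻¹) = 1 / 3 by norm_num]
    linarith
  have hbadterm : ∀ p ∈ (boxp ×ˢ boxp).filter
      (fun p => ¬((∑ k, p.1 k) + (∑ k, p.2 k) ≤ 3 * m)),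
      ‖(List.ofFn fun k => Polynomial.aeval (O k) (Bpoly (p.2 k))).reverse.prod *
        (List.ofFn fun k => Polynomial.aeval (O k) (Bpoly (p.1 k))).prod‖
      ≤ (3 * ε) ^ (m + 1) *
        ((∏ k, ((3 : ℝ)⁻¹) ^ (p.2 k - 1)) * ∏ k, ((3 : ℝ)⁻¹) ^ (p.1 k - 1)) := by
    intro p hp
    rw [Finset.mem_filter] at hp
    obtain ⟨hpbox, hpcond⟩ := hp
    rw [Finset.mem_product] at hpbox
    have h1mem : ∀ k, 1 ≤ p.1 k := fun k =>
      (Finset.mem_Icc.mp (Fintype.mem_piFinset.mp hpbox.1 k)).1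
    have h2mem : ∀ k, 1 ≤ p.2 k := fun k =>
      (Finset.mem_Icc.mp (Fintype.mem_piFinset.mp hpbox.2 k)).1
    have hn1 : ‖(List.ofFn fun k => Polynomial.aeval (O k) (Bpoly (p.1 k))).prod‖
        ≤ ∏ k, ε ^ (p.1 k - 1) := by
      calc ‖(List.ofFn fun k => Polynomial.aeval (O k) (Bpoly (p.1 k))).prod‖
          ≤ ∏ k, ‖Polynomial.aeval (O k) (Bpoly (p.1 k))‖ := norm_ofFn_prod_le hm _
        _ ≤ ∏ k, ε ^ (p.1 k - 1) := Finset.prod_le_prod (fun _ _ => norm_nonneg _)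
            (fun k _ => hAnorm k _ (h1mem k))
    have hn2 : ‖(List.ofFn fun k => Polynomial.aeval (O k) (Bpoly (p.2 k))).reverse.prod‖
        ≤ ∏ k, ε ^ (p.2 k - 1) := by
      calc ‖(List.ofFn fun k => Polynomial.aeval (O k) (Bpoly (p.2 k))).reverse.prod‖
          ≤ ∏ k, ‖Polynomial.aeval (O k) (Bpoly (p.2 k))‖ := norm_ofFn_rev_prod_le hm _
        _ ≤ ∏ k, ε ^ (p.2 k - 1) := Finset.prod_le_prod (fun _ _ => norm_nonneg _)
            (fun k _ => hAnorm k _ (h2mem k))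
    have hsum1 : ∑ k, (p.1 k - 1) + m = ∑ k, p.1 k := by
      calc ∑ k, (p.1 k - 1) + m = ∑ k, ((p.1 k - 1) + 1) := by
            rw [Finset.sum_add_distrib]; simp
        _ = ∑ k, p.1 k := Finset.sum_congr rfl fun k _ => Nat.sub_add_cancel (h1mem k)
    have hsum2 : ∑ k, (p.2 k - 1) + m = ∑ k, p.2 k := by
      calc ∑ k, (p.2 k - 1) + m = ∑ k, ((p.2 k - 1) + 1) := by
            rw [Finset.sum_add_distrib]; simp
        _ = ∑ k, p.2 k := Finset.sum_congr rfl fun k _ => Nat.sub_add_cancel (h2mem k)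
    rw [not_le] at hpcond
    have hekey : m + 1 ≤ (∑ k, (p.2 k - 1)) + (∑ k, (p.1 k - 1)) := by omega
    calc ‖(List.ofFn fun k => Polynomial.aeval (O k) (Bpoly (p.2 k))).reverse.prod *
          (List.ofFn fun k => Polynomial.aeval (O k) (Bpoly (p.1 k))).prod‖
        ≤ ‖(List.ofFn fun k => Polynomial.aeval (O k) (Bpoly (p.2 k))).reverse.prod‖ *
          ‖(List.ofFn fun k => Polynomial.aeval (O k) (Bpoly (p.1 k))).prod‖ :=
          norm_mul_le _ _
      _ ≤ (∏ k, ε ^ (p.2 k - 1)) * (∏ k, ε ^ (p.1 k - 1)) :=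
          mul_le_mul hn2 hn1 (norm_nonneg _) (by positivity)
      _ = ε ^ ((∑ k, (p.2 k - 1)) + (∑ k, (p.1 k - 1))) := by
          rw [Finset.prod_pow_eq_pow_sum, Finset.prod_pow_eq_pow_sum, ← pow_add]
      _ ≤ (3 * ε) ^ (m + 1) * ((3 : ℝ)⁻¹) ^ ((∑ k, (p.2 k - 1)) + (∑ k, (p.1 k - 1))) :=
          hkey _ hekey
      _ = (3 * ε) ^ (m + 1) *
          ((∏ k, ((3 : ℝ)⁻¹) ^ (p.2 k - 1)) * ∏ k, ((3 : ℝ)⁻¹) ^ (p.1 k - 1)) := by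
          rw [pow_add ((3 : ℝ)⁻¹) (∑ k, (p.2 k - 1)) (∑ k, (p.1 k - 1)),
            Finset.prod_pow_eq_pow_sum, Finset.prod_pow_eq_pow_sum]
  have hgle : ∑ n ∈ Finset.Icc 1 (3 * m), ((3 : ℝ)⁻¹) ^ (n - 1) ≤ 3 / 2 := by
    have h := geom_third (3 * m)
    have h0 : (0 : ℝ) ≤ (3⁻¹ : ℝ) ^ (3 * m) := by positivity
    linarith
  have hg0 : 0 ≤ ∑ n ∈ Finset.Icc 1 (3 * m), ((3 : ℝ)⁻¹) ^ (n - 1) :=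
    Finset.sum_nonneg fun n _ => by positivity
  have hgsum : ∑ a ∈ boxp, ∏ k, ((3 : ℝ)⁻¹) ^ (a k - 1)
      = (∑ n ∈ Finset.Icc 1 (3 * m), ((3 : ℝ)⁻¹) ^ (n - 1)) ^ m := by
    have h1 : ∏ _k : Fin m, (∑ n ∈ Finset.Icc 1 (3 * m), ((3 : ℝ)⁻¹) ^ (n - 1))
        = (∑ n ∈ Finset.Icc 1 (3 * m), ((3 : ℝ)⁻¹) ^ (n - 1)) ^ m := by
      rw [Finset.prod_const, Finset.card_univ, Fintype.card_fin]
    rw [hboxp, ← h1]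
    exact (Finset.prod_univ_sum (fun _ : Fin m => Finset.Icc 1 (3 * m))
      (fun _ j => ((3 : ℝ)⁻¹) ^ (j - 1))).symm
  have hwsum : ∑ p ∈ boxp ×ˢ boxp,
      ((∏ k, ((3 : ℝ)⁻¹) ^ (p.2 k - 1)) * ∏ k, ((3 : ℝ)⁻¹) ^ (p.1 k - 1))
      ≤ (3 / 2 : ℝ) ^ m * (3 / 2) ^ m := by
    rw [Finset.sum_product, Finset.sum_comm]
    have hinner : ∀ b ∈ boxp, ∑ a ∈ boxp,
        ((∏ k, ((3 : ℝ)⁻¹) ^ (b k - 1)) * ∏ k, ((3 : ℝ)⁻¹) ^ (a k - 1))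
        = (∏ k, ((3 : ℝ)⁻¹) ^ (b k - 1)) *
          (∑ n ∈ Finset.Icc 1 (3 * m), ((3 : ℝ)⁻¹) ^ (n - 1)) ^ m := by
      intro b _
      rw [← Finset.mul_sum, hgsum]
    rw [Finset.sum_congr rfl hinner, ← Finset.sum_mul, hgsum]
    have hpm : (∑ n ∈ Finset.Icc 1 (3 * m), ((3 : ℝ)⁻¹) ^ (n - 1)) ^ m ≤ (3 / 2 : ℝ) ^ m :=
      pow_le_pow_left₀ hg0 hgle m
    exact mul_le_mul hpm hpm (pow_nonneg hg0 m) (by positivity)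
  have hbadbound : ‖bad‖ ≤ (3 * ε) ^ (m + 1) * ((3 / 2 : ℝ) ^ m * (3 / 2) ^ m) := by
    rw [hbaddef]
    calc ‖∑ p ∈ (boxp ×ˢ boxp).filter
          (fun p => ¬((∑ k, p.1 k) + (∑ k, p.2 k) ≤ 3 * m)),
          (List.ofFn fun k => Polynomial.aeval (O k) (Bpoly (p.2 k))).reverse.prod *
            (List.ofFn fun k => Polynomial.aeval (O k) (Bpoly (p.1 k))).prod‖
        ≤ ∑ p ∈ (boxp ×ˢ boxp).filter
            (fun p => ¬((∑ k, p.1 k) + (∑ k, p.2 k) ≤ 3 * m)),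
          ‖(List.ofFn fun k => Polynomial.aeval (O k) (Bpoly (p.2 k))).reverse.prod *
            (List.ofFn fun k => Polynomial.aeval (O k) (Bpoly (p.1 k))).prod‖ :=
          norm_sum_le _ _
      _ ≤ ∑ p ∈ (boxp ×ˢ boxp).filter
            (fun p => ¬((∑ k, p.1 k) + (∑ k, p.2 k) ≤ 3 * m)),
          (3 * ε) ^ (m + 1) *
            ((∏ k, ((3 : ℝ)⁻¹) ^ (p.2 k - 1)) * ∏ k, ((3 : ℝ)⁻¹) ^ (p.1 k - 1)) :=
          Finset.sum_le_sum hbadterm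
      _ = (3 * ε) ^ (m + 1) * ∑ p ∈ (boxp ×ˢ boxp).filter
            (fun p => ¬((∑ k, p.1 k) + (∑ k, p.2 k) ≤ 3 * m)),
          ((∏ k, ((3 : ℝ)⁻¹) ^ (p.2 k - 1)) * ∏ k, ((3 : ℝ)⁻¹) ^ (p.1 k - 1)) := by
          rw [← Finset.mul_sum]
      _ ≤ (3 * ε) ^ (m + 1) * ∑ p ∈ boxp ×ˢ boxp,
          ((∏ k, ((3 : ℝ)⁻¹) ^ (p.2 k - 1)) * ∏ k, ((3 : ℝ)⁻¹) ^ (p.1 k - 1)) := by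
          apply mul_le_mul_of_nonneg_left _ (by positivity)
          apply Finset.sum_le_sum_of_subset_of_nonneg (Finset.filter_subset _ _)
          intro p _ _
          positivity
      _ ≤ (3 * ε) ^ (m + 1) * ((3 / 2 : ℝ) ^ m * (3 / 2) ^ m) :=
          mul_le_mul_of_nonneg_left hwsum (by positivity)
  calc ‖robTildeOp m d O -
        ContinuousLinearMap.adjoint ((List.ofFn fun k => B k).prod) *
          (List.ofFn fun k => B k).prod‖
      = ‖(F - (List.ofFn fun k => B k).reverse.prod * (List.ofFn fun k => B k).prod) - bad‖ :=
        by rw [hCC, hsplit]; congr 1; abel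
    _ ≤ ‖F - (List.ofFn fun k => B k).reverse.prod * (List.ofFn fun k => B k).prod‖ + ‖bad‖ :=
        norm_sub_le _ _
    _ ≤ ((m : ℝ) + m) * ε ^ (3 * m) +
        (3 * ε) ^ (m + 1) * ((3 / 2 : ℝ) ^ m * (3 / 2) ^ m) := add_le_add htel hbadbound
    _ ≤ (10 * ε) ^ m := final_arith m hm ε hε0 hε
end

section
/- Let $O_1, \ldots, O_m$ be Hermitian operators with eigenvalues in $[0,1]$, and suppose there exists an orthogonal projector $\Pi$ with $O_j \Pi = \Pi$ for every $j \in [m]$. Then $\widetilde{\mathrm{Rob}}(O_1,\ldots,O_m)\,\Pi = \Pi$, where $\widetilde{\mathrm{Rob}}$ is the degree-$3m$ truncated robust polynomial $\widetilde{\mathrm{Rob}}(O_1,\ldots,O_m) = \sum_{(i_1+i_1')+\cdots+(i_m+i_m') \le 3m} B_{i_m'}(O_m)\cdots B_{i_1'}(O_1) B_{i_1}(O_1)\cdots B_{i_m}(O_m)$ with $B_1(x)=x$ and $B_i(x)=x^{i-1}(x-1)$ for $i \ge 2$. -/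
open Polynomial

lemma aeval_Bpoly_mul {d : ℕ}
    (A Pr : EuclideanSpace ℂ (Fin d) →L[ℂ] EuclideanSpace ℂ (Fin d))
    (hA : A * Pr = Pr) (i : ℕ) :
    (Polynomial.aeval A (Bpoly i)) * Pr = if i = 1 then Pr else 0 := by
  by_cases hi : i = 1
  · simp [Bpoly, hi, hA]
  · have h1 : (A - 1) * Pr = 0 := by
      rw [sub_mul, one_mul, hA, sub_self]
    simp only [Bpoly, hi, if_false, map_mul, map_pow, aeval_X, map_sub, map_one]
    rw [mul_assoc, h1, mul_zero]

lemma prod_Bpoly_mul {d : ℕ} (Pr : EuclideanSpace ℂ (Fin d) →L[ℂ] EuclideanSpace ℂ (Fin d)) :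
    ∀ (m : ℕ) (O : Fin m → (EuclideanSpace ℂ (Fin d) →L[ℂ] EuclideanSpace ℂ (Fin d))),
    (∀ k, O k * Pr = Pr) → ∀ f : Fin m → ℕ,
    (List.ofFn fun k => Polynomial.aeval (O k) (Bpoly (f k))).prod * Pr
      = if (∀ k, f k = 1) then Pr else 0 := by
  intro m
  induction m with
  | zero => intro O hO f; simp
  | succ n ih =>
    intro O hO f
    rw [List.ofFn_succ, List.prod_cons, mul_assoc,
      ih (fun k => O k.succ) (fun k => hO k.succ) (fun k => f k.succ)]
    by_cases h : ∀ k : Fin n, f k.succ = 1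
    · rw [if_pos h, aeval_Bpoly_mul _ _ (hO 0)]
      by_cases h0 : f 0 = 1
      · have : ∀ k : Fin (n + 1), f k = 1 := by
          intro k
          rcases Fin.eq_zero_or_eq_succ k with rfl | ⟨j, rfl⟩
          · exact h0
          · exact h j
        simp [h0, this]
      · have : ¬ ∀ k : Fin (n + 1), f k = 1 := fun hh => h0 (hh 0)
        simp [h0, this]
    · have : ¬ ∀ k : Fin (n + 1), f k = 1 := fun hh => h fun k => hh k.succ
      simp [h, this]

lemma revprod_Bpoly_mul {d : ℕ} (Pr : EuclideanSpace ℂ (Fin d) →L[ℂ] EuclideanSpace ℂ (Fin d)) :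
    ∀ (m : ℕ) (O : Fin m → (EuclideanSpace ℂ (Fin d) →L[ℂ] EuclideanSpace ℂ (Fin d))),
    (∀ k, O k * Pr = Pr) → ∀ f : Fin m → ℕ,
    (List.ofFn fun k => Polynomial.aeval (O k) (Bpoly (f k))).reverse.prod * Pr
      = if (∀ k, f k = 1) then Pr else 0 := by
  intro m
  induction m with
  | zero => intro O hO f; simp
  | succ n ih =>
    intro O hO f
    rw [List.ofFn_succ, List.reverse_cons, List.prod_append, List.prod_singleton,
      mul_assoc, aeval_Bpoly_mul _ _ (hO 0)]
    by_cases h0 : f 0 = 1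
    · rw [if_pos h0]
      rw [ih (fun k => O k.succ) (fun k => hO k.succ) (fun k => f k.succ)]
      by_cases h : ∀ k : Fin n, f k.succ = 1
      · have : ∀ k : Fin (n + 1), f k = 1 := by
          intro k
          rcases Fin.eq_zero_or_eq_succ k with rfl | ⟨j, rfl⟩
          · exact h0
          · exact h j
        simp [h, this]
      · have : ¬ ∀ k : Fin (n + 1), f k = 1 := fun hh => h fun k => hh k.succ
        simp [h, this]
    · have : ¬ ∀ k : Fin (n + 1), f k = 1 := fun hh => h0 (hh 0)
      simp [h0, this]

theorem robTildeOp_fixes_ground (m d : ℕ)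
    (O : Fin m → (EuclideanSpace ℂ (Fin d) →L[ℂ] EuclideanSpace ℂ (Fin d)))
    (hO : ∀ k, IsSelfAdjoint (O k))
    (hspec : ∀ k, ∀ μ : ℝ, (μ : ℂ) ∈ spectrum ℂ (O k) → μ ∈ Set.Icc (0 : ℝ) 1)
    (Pr : EuclideanSpace ℂ (Fin d) →L[ℂ] EuclideanSpace ℂ (Fin d))
    (hPr1 : IsIdempotentElem Pr) (hPr2 : IsSelfAdjoint Pr)
    (hfix : ∀ k, O k * Pr = Pr) :
    robTildeOp m d O * Pr = Pr := by
  rw [robTildeOp, Finset.sum_mul]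
  have hterm : ∀ p : (Fin m → ℕ) × (Fin m → ℕ),
      ((List.ofFn fun k => Polynomial.aeval (O k) (Bpoly (p.2 k))).reverse.prod) *
        ((List.ofFn fun k => Polynomial.aeval (O k) (Bpoly (p.1 k))).prod) * Pr
      = if ((∀ k, p.1 k = 1) ∧ (∀ k, p.2 k = 1)) then Pr else 0 := by
    intro p
    rw [mul_assoc, prod_Bpoly_mul Pr m O hfix p.1]
    by_cases h1 : ∀ k, p.1 k = 1
    · rw [if_pos h1, revprod_Bpoly_mul Pr m O hfix p.2]
      by_cases h2 : ∀ k, p.2 k = 1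
      · simp [h1, h2]
      · simp [h2]
    · simp [h1]
  rw [Finset.sum_congr rfl (fun p _ => hterm p)]
  have hcond : ∀ p : (Fin m → ℕ) × (Fin m → ℕ),
      (((∀ k, p.1 k = 1) ∧ (∀ k, p.2 k = 1)) ↔ p = ((fun _ => 1), (fun _ => 1))) := by
    intro p
    constructor
    · rintro ⟨h1, h2⟩
      exact Prod.ext (funext h1) (funext h2)
    · rintro rfl
      exact ⟨fun _ => rfl, fun _ => rfl⟩
  have : (∑ p ∈ (((Fintype.piFinset fun _ : Fin m => Finset.Icc 1 (3 * m)) ×ˢ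
      (Fintype.piFinset fun _ : Fin m => Finset.Icc 1 (3 * m))).filter
      fun p => (∑ k, p.1 k) + (∑ k, p.2 k) ≤ 3 * m),
      if ((∀ k, p.1 k = 1) ∧ (∀ k, p.2 k = 1)) then Pr else 0)
      = ∑ p ∈ (((Fintype.piFinset fun _ : Fin m => Finset.Icc 1 (3 * m)) ×ˢ
      (Fintype.piFinset fun _ : Fin m => Finset.Icc 1 (3 * m))).filter
      fun p => (∑ k, p.1 k) + (∑ k, p.2 k) ≤ 3 * m),
      if p = (((fun _ => 1) : Fin m → ℕ), ((fun _ => 1) : Fin m → ℕ)) then Pr else 0 := by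
    refine Finset.sum_congr rfl fun p _ => ?_
    rw [if_congr (hcond p) rfl rfl]
  rw [this, Finset.sum_ite_eq']
  have hmem : (((fun _ => 1) : Fin m → ℕ), ((fun _ => 1) : Fin m → ℕ)) ∈
      (((Fintype.piFinset fun _ : Fin m => Finset.Icc 1 (3 * m)) ×ˢ
      (Fintype.piFinset fun _ : Fin m => Finset.Icc 1 (3 * m))).filter
      fun p => (∑ k, p.1 k) + (∑ k, p.2 k) ≤ 3 * m) := by
    simp only [Finset.mem_filter, Finset.mem_product, Fintype.mem_piFinset, Finset.mem_Icc]
    refine ⟨⟨fun k => ⟨le_refl 1, ?_⟩, fun k => ⟨le_refl 1, ?_⟩⟩, ?_⟩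
    · have := k.2; omega
    · have := k.2; omega
    · simp; omega
  rw [if_pos hmem]
end

section
/- Let $n$ be a positive integer and let $s$ be a real number with $\sqrt{n} \le s \le n$. Then there exists a multilinear polynomial $P$ in $n$ variables of degree $O(s)$ such that for every $x \in \{0,1\}^n$, $|P(x) - \mathrm{AND}(x)| \le 2^{-s^2/n}$, where $\mathrm{AND}(x) = 1$ if $x_1 = \cdots = x_n = 1$ and $0$ otherwise. -/
set_option maxHeartbeats 1000000

open Polynomial Finset

namespace AndApprox

variable {n : ℕ}

/-- elementary symmetric polynomial as a sum over k-subsets -/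
noncomputable def E (n k : ℕ) : MvPolynomial (Fin n) ℝ :=
  ∑ S ∈ Finset.powersetCard k Finset.univ, ∏ i ∈ S, MvPolynomial.X i

lemma E_totalDegree (k : ℕ) : (E n k).totalDegree ≤ k := by
  refine (MvPolynomial.totalDegree_finset_sum _ _).trans ?_
  refine Finset.sup_le fun S hS => ?_
  refine (MvPolynomial.totalDegree_finset_prod _ _).trans ?_
  have : ∀ i ∈ S, (MvPolynomial.X i : MvPolynomial (Fin n) ℝ).totalDegree = 1 := by
    intro i _; exact MvPolynomial.totalDegree_X i
  calc ∑ i ∈ S, (MvPolynomial.X i : MvPolynomial (Fin n) ℝ).totalDegree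
      = ∑ i ∈ S, 1 := Finset.sum_congr rfl this
    _ = S.card := by simp
    _ ≤ k := le_of_eq (Finset.mem_powersetCard.mp hS).2

lemma E_degreeOf (k : ℕ) (i : Fin n) : (E n k).degreeOf i ≤ 1 := by
  refine (MvPolynomial.degreeOf_sum_le _ _ _).trans ?_
  refine Finset.sup_le fun S hS => ?_
  classical
  refine (MvPolynomial.degreeOf_prod_le _ _ _).trans ?_
  calc ∑ j ∈ S, (MvPolynomial.X j : MvPolynomial (Fin n) ℝ).degreeOf i
      ≤ ∑ j ∈ S, if i = j then 1 else 0 := by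
        refine Finset.sum_le_sum fun j _ => ?_
        simp [MvPolynomial.degreeOf_X]
    _ ≤ 1 := by
        rw [Finset.sum_ite_eq S i (fun _ => 1)]
        split <;> simp

lemma E_eval (k : ℕ) (x : Fin n → ℝ) (hx : ∀ i, x i = 0 ∨ x i = 1) :
    MvPolynomial.eval x (E n k) =
      ((Finset.univ.filter (fun i => x i = 1)).card).choose k := by
  classical
  set T := Finset.univ.filter (fun i => x i = 1) with hT
  rw [E, map_sum]
  have key : ∀ S ∈ Finset.powersetCard k (Finset.univ : Finset (Fin n)),
      MvPolynomial.eval x (∏ i ∈ S, MvPolynomial.X i) = if S ⊆ T then 1 else 0 := by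
    intro S _
    rw [map_prod]
    by_cases h : S ⊆ T
    · rw [if_pos h]
      refine Finset.prod_eq_one fun i hi => ?_
      have := h hi
      simp only [hT, Finset.mem_filter] at this
      simp [this.2]
    · rw [if_neg h]
      obtain ⟨i, hiS, hiT⟩ := Finset.not_subset.mp h
      refine Finset.prod_eq_zero hiS ?_
      simp only [hT, Finset.mem_filter, Finset.mem_univ, true_and] at hiT
      rcases hx i with h0 | h1
      · simpa using h0
      · exact absurd h1 hiT
  rw [Finset.sum_congr rfl key]
  have hfilt : (Finset.powersetCard k (Finset.univ : Finset (Fin n))).filter (· ⊆ T)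
      = Finset.powersetCard k T := by
    ext S
    simp only [Finset.mem_filter, Finset.mem_powersetCard]
    constructor
    · rintro ⟨⟨_, hc⟩, hsub⟩; exact ⟨hsub, hc⟩
    · rintro ⟨hsub, hc⟩; exact ⟨⟨Finset.subset_univ S, hc⟩, hsub⟩
  rw [← Finset.sum_filter, hfilt, Finset.sum_const, Finset.card_powersetCard]
  simp

end AndApprox

namespace AndApprox2
open AndApprox

lemma multilin (n : ℕ) (d : ℕ) : ∀ Q : Polynomial ℝ, Q.natDegree ≤ d →
    ∃ P : MvPolynomial (Fin n) ℝ, P.totalDegree ≤ d ∧ (∀ i, P.degreeOf i ≤ 1) ∧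
      ∀ x : Fin n → ℝ, (∀ i, x i = 0 ∨ x i = 1) →
        MvPolynomial.eval x P = Q.eval (((Finset.univ.filter (fun i => x i = 1)).card : ℝ)) := by
  induction d with
  | zero =>
    intro Q hQ
    refine ⟨MvPolynomial.C (Q.coeff 0), ?_, ?_, ?_⟩
    · simp [MvPolynomial.totalDegree_C]
    · intro i; simp [MvPolynomial.degreeOf_C]
    · intro x hx
      rw [Polynomial.eq_C_of_natDegree_le_zero hQ]
      simp
  | succ d ih =>
    intro Q hQ
    set c := Q.coeff (d + 1) with hc
    set Q' := Q - Polynomial.C c * descPochhammer ℝ (d + 1) with hQ'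
    have hdeg' : Q'.natDegree ≤ d := by
      rw [Polynomial.natDegree_le_iff_coeff_eq_zero]
      intro j hj
      rw [hQ', Polynomial.coeff_sub, Polynomial.coeff_C_mul]
      rcases eq_or_lt_of_le (Nat.succ_le_of_lt hj) with h | h
      · rw [← h]
        have hmon := monic_descPochhammer ℝ (d + 1)
        have hnd := descPochhammer_natDegree (R := ℝ) (d + 1)
        rw [Polynomial.Monic.def, Polynomial.leadingCoeff, hnd] at hmon
        rw [hmon, mul_one, ← hc, sub_self]
      · have h1 : Q.coeff j = 0 := Polynomial.coeff_eq_zero_of_natDegree_lt (lt_of_le_of_lt hQ h)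
        have h2 : (descPochhammer ℝ (d + 1)).coeff j = 0 := by
          refine Polynomial.coeff_eq_zero_of_natDegree_lt ?_
          rw [descPochhammer_natDegree]; exact h
        rw [h1, h2, mul_zero, sub_zero]
    obtain ⟨P', hP1, hP2, hP3⟩ := ih Q' hdeg'
    refine ⟨MvPolynomial.C (c * (d+1).factorial) * E n (d+1) + P', ?_, ?_, ?_⟩
    · refine (MvPolynomial.totalDegree_add _ _).trans ?_
      refine max_le ?_ (hP1.trans (Nat.le_succ d))
      refine (MvPolynomial.totalDegree_mul _ _).trans ?_
      rw [MvPolynomial.totalDegree_C]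
      simpa using E_totalDegree (n := n) (d+1)
    · intro i
      refine (MvPolynomial.degreeOf_add_le _ _ _).trans ?_
      refine max_le ?_ (hP2 i)
      exact (MvPolynomial.degreeOf_C_mul_le _ _ _).trans (E_degreeOf (d+1) i)
    · intro x hx
      have hE := E_eval (n := n) (d+1) x hx
      set m := (Finset.univ.filter (fun i => x i = 1)).card with hm
      have hQeval : Q.eval (m : ℝ) = Q'.eval (m : ℝ) + c * (descPochhammer ℝ (d+1)).eval (m : ℝ) := by
        rw [hQ']; simp only [Polynomial.eval_sub, Polynomial.eval_mul, Polynomial.eval_C]; ring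
      rw [map_add, map_mul, MvPolynomial.eval_C, hE, hP3 x hx, hQeval,
        descPochhammer_eval_eq_descFactorial,
        Nat.descFactorial_eq_factorial_mul_choose]
      push_cast
      ring
end AndApprox2

namespace Cheb
open Polynomial.Chebyshev Real

lemma T_real_cosh (t : ℝ) (d : ℤ) : (T ℝ d).eval (Real.cosh t) = Real.cosh (d * t) := by
  have h : ((((T ℝ d).eval (Real.cosh t)) : ℝ) : ℂ) = ((Real.cosh (d * t) : ℝ) : ℂ) := by
    rw [complex_ofReal_eval_T, Complex.ofReal_cosh, Complex.ofReal_cosh,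
      ← Complex.cos_mul_I, ← Complex.cos_mul_I, T_complex_cos]
    push_cast
    ring_nf
  exact_mod_cast h

lemma natDegree_T_le (d : ℕ) : (T ℝ (d : ℤ)).natDegree ≤ d := by
  induction d using Nat.twoStepInduction with
  | zero => simp [T_zero]
  | one => simp [T_one]
  | more d ih1 ih2 =>
    have : ((d : ℤ) + 2) = ((d + 2 : ℕ) : ℤ) := by push_cast; ring
    rw [← this, T_add_two]
    refine (Polynomial.natDegree_sub_le _ _).trans ?_
    refine max_le ?_ (ih1.trans (by omega))
    refine (Polynomial.natDegree_mul_le).trans ?_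
    have h1 : (2 * Polynomial.X : Polynomial ℝ).natDegree ≤ 1 := by
      refine (Polynomial.natDegree_mul_le).trans ?_
      simp
    have : ((d : ℤ) + 1) = ((d + 1 : ℕ) : ℤ) := by push_cast; ring
    rw [this]
    omega

lemma abs_T_le_one {y : ℝ} (hy : y ∈ Set.Icc (-1 : ℝ) 1) (d : ℤ) :
    |(T ℝ d).eval y| ≤ 1 := by
  rw [← Real.cos_arccos hy.1 hy.2, T_real_cos]
  exact Real.abs_cos_le_one _

/-- parametrization: for x ≥ 1, x = cosh (arsinh √(x²-1)) -/
noncomputable def th (x : ℝ) : ℝ := Real.arsinh (Real.sqrt (x^2 - 1))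

lemma th_nonneg {x : ℝ} : 0 ≤ th x := Real.arsinh_nonneg_iff.mpr (Real.sqrt_nonneg _)

lemma cosh_th {x : ℝ} (hx : 1 ≤ x) : Real.cosh (th x) = x := by
  rw [th, Real.cosh_arsinh, Real.sq_sqrt (by nlinarith : (0:ℝ) ≤ x^2-1),
    show 1 + (x^2 - 1) = x^2 by ring]
  exact Real.sqrt_sq (by linarith)

lemma exp_th {x : ℝ} (hx : 1 ≤ x) : Real.exp (th x) = x + Real.sqrt (x^2 - 1) := by
  rw [← Real.cosh_add_sinh, cosh_th hx, th, Real.sinh_arsinh]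

lemma T_eval_ge {x : ℝ} (hx : 1 ≤ x) (d : ℕ) :
    (x + Real.sqrt (x^2 - 1))^d / 2 ≤ (T ℝ (d : ℤ)).eval x := by
  rw [← cosh_th hx, T_real_cosh, cosh_th hx]
  have h1 : Real.exp ((d : ℝ) * th x) ≤ 2 * Real.cosh ((d : ℝ) * th x) := by
    rw [Real.cosh_eq]
    have := Real.exp_pos (-((d : ℝ) * th x))
    linarith
  have h2 : (x + Real.sqrt (x^2-1))^d = Real.exp ((d : ℝ) * th x) := by
    rw [← exp_th hx, ← Real.exp_nat_mul]
  rw [h2]; push_cast; linarith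

lemma T_eval_one_le {x : ℝ} (hx : 1 ≤ x) (d : ℤ) : 1 ≤ (T ℝ d).eval x := by
  rw [← cosh_th hx, T_real_cosh]
  exact Real.one_le_cosh _

lemma T_eval_mono {x y : ℝ} (hy : 1 ≤ y) (hxy : y ≤ x) (d : ℤ) :
    (T ℝ d).eval y ≤ (T ℝ d).eval x := by
  have hx : 1 ≤ x := hy.trans hxy
  rw [← cosh_th hx, ← cosh_th hy, T_real_cosh, T_real_cosh]
  rw [Real.cosh_le_cosh]
  have h1 : th y ≤ th x := by
    rw [th, th]
    apply Real.arsinh_le_arsinh.mpr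
    apply Real.sqrt_le_sqrt
    nlinarith
  rw [abs_mul, abs_mul, abs_of_nonneg th_nonneg, abs_of_nonneg th_nonneg]
  exact mul_le_mul_of_nonneg_left h1 (abs_nonneg _)

end Cheb

namespace Univ
open Polynomial Polynomial.Chebyshev Real Cheb Finset

lemma fact_lb (a : ℕ) : (a:ℝ)^a ≤ (a.factorial : ℝ) * Real.exp a := by
  induction a with
  | zero => simp
  | succ a ih =>
    rcases Nat.eq_zero_or_pos a with rfl | ha
    · norm_num
    have hstep : ((a:ℝ)+1)^a ≤ (a:ℝ)^a * Real.exp 1 := by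
      have h1 : (1 + 1/(a:ℝ)) ≤ Real.exp (1/(a:ℝ)) := by
        have := Real.add_one_le_exp (1/(a:ℝ)); linarith
      have ha' : (0:ℝ) < a := by exact_mod_cast ha
      have h2 : ((a:ℝ)+1)^a = (a:ℝ)^a * (1 + 1/(a:ℝ))^a := by
        rw [← mul_pow]; congr 1; field_simp
      rw [h2]
      have h3 : (1 + 1/(a:ℝ))^a ≤ Real.exp (1/(a:ℝ)) ^ a :=
        pow_le_pow_left₀ (by positivity) h1 a
      have h4 : Real.exp (1/(a:ℝ)) ^ a = Real.exp 1 := by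
        rw [← Real.exp_nat_mul]
        congr 1; field_simp
      rw [h4] at h3
      have : (0:ℝ) ≤ (a:ℝ)^a := by positivity
      nlinarith
    have key : ((a:ℝ)+1)^(a+1) ≤ ((a:ℝ)+1) * ((a:ℝ)^a * Real.exp 1) := by
      rw [pow_succ]
      have : (0:ℝ) ≤ (a:ℝ)+1 := by positivity
      nlinarith
    calc ((a+1:ℕ):ℝ)^(a+1) = ((a:ℝ)+1)^(a+1) := by push_cast; ring
      _ ≤ ((a:ℝ)+1) * ((a:ℝ)^a * Real.exp 1) := key
      _ ≤ ((a:ℝ)+1) * (((a.factorial:ℝ) * Real.exp a) * Real.exp 1) := by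
          have h0 : (0:ℝ) ≤ (a:ℝ)+1 := by positivity
          have he : (0:ℝ) < Real.exp 1 := Real.exp_pos 1
          have := mul_le_mul_of_nonneg_right ih he.le
          exact mul_le_mul_of_nonneg_left this h0
      _ = ((a+1).factorial : ℝ) * Real.exp ((a:ℝ)+1) := by
          rw [Nat.factorial_succ,
            mul_assoc ((a.factorial:ℝ)) (Real.exp a) (Real.exp 1), ← Real.exp_add]
          push_cast; ring
      _ = ((a+1).factorial : ℝ) * Real.exp ((a+1 : ℕ) : ℝ) := by push_cast; ring_nf

lemma exp_nat_le (a : ℕ) : Real.exp a ≤ (4:ℝ)^a := by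
  have h1 : Real.exp (a : ℝ) = Real.exp 1 ^ a := by
    rw [← Real.exp_nat_mul]; congr 1; ring
  rw [h1]
  exact pow_le_pow_left₀ (Real.exp_pos 1).le (by nlinarith [Real.exp_one_lt_d9]) a

lemma log_one_add_ge {y : ℝ} (h0 : 0 ≤ y) (h2 : y ≤ 2) : Real.exp (y/3) ≤ 1 + y := by
  have h := Real.add_one_le_exp (-(y/3))
  have hpos : (0:ℝ) < 1 - y/3 := by linarith
  have hh : 1 - y/3 ≤ Real.exp (-(y/3)) := by linarith
  have h4 : Real.exp (y/3) ≤ 1/(1 - y/3) := by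
    rw [Real.exp_neg] at hh
    have he := Real.exp_pos (y/3)
    rw [le_div_iff₀ hpos]
    calc Real.exp (y/3) * (1 - y/3) ≤ Real.exp (y/3) * (Real.exp (y/3))⁻¹ :=
          mul_le_mul_of_nonneg_left hh he.le
      _ = 1 := mul_inv_cancel₀ he.ne'
  refine h4.trans ?_
  rw [div_le_iff₀ hpos]
  nlinarith


lemma band (n K dd : ℕ) (hK : 1 ≤ K) (hKn : 2*K ≤ n) : ∃ F : Polynomial ℝ,
    F.natDegree ≤ dd ∧ F.eval 0 = 1 ∧ (∀ u : ℝ, 0 ≤ u → u ≤ (n:ℝ) → |F.eval u| ≤ 1) ∧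
    (∀ u : ℝ, (K:ℝ) ≤ u → u ≤ (n:ℝ) →
      |F.eval u| ≤ 2 * Real.exp (-((dd:ℝ) * (2 * Real.sqrt ((K:ℝ)/n)) / 3))) := by
  have hKpos : (0:ℝ) < K := by exact_mod_cast hK
  have hnK : (K:ℝ) ≤ (n:ℝ) - K := by
    have : (2*K : ℝ) ≤ n := by exact_mod_cast hKn
    linarith
  have hden : (0:ℝ) < (n:ℝ) - K := lt_of_lt_of_le hKpos hnK
  have hnpos : (0:ℝ) < n := by linarith
  set x0 : ℝ := ((n:ℝ) + K)/((n:ℝ) - K) with hx0def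
  set μ : ℝ := 2*(K:ℝ)/((n:ℝ) - K) with hmu
  have hx0eq : x0 = 1 + μ := by rw [hx0def, hmu]; field_simp; ring
  have hmupos : 0 < μ := by positivity
  have hx0gt : 1 < x0 := by rw [hx0eq]; linarith
  set L : Polynomial ℝ := Polynomial.C x0 - Polynomial.C (2/((n:ℝ) - K)) * Polynomial.X with hL
  have hLeval : ∀ u : ℝ, L.eval u = x0 - 2*u/((n:ℝ)-K) := by
    intro u; rw [hL]; simp [Polynomial.eval_sub, Polynomial.eval_mul]; ring
  have hTx0pos : (0:ℝ) < (T ℝ (dd:ℤ)).eval x0 := lt_of_lt_of_le one_pos (T_eval_one_le hx0gt.le _)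
  have hLub : ∀ u : ℝ, 0 ≤ u → L.eval u ≤ x0 := by
    intro u hu
    rw [hLeval]
    have : 0 ≤ 2*u/((n:ℝ)-K) := by positivity
    linarith
  have hLlb : ∀ u : ℝ, u ≤ (n:ℝ) → -1 ≤ L.eval u := by
    intro u hun
    rw [hLeval]
    have : 2*u/((n:ℝ)-K) ≤ x0 + 1 := by
      rw [hx0def, div_add' _ _ _ hden.ne', div_le_div_iff_of_pos_right hden]
      linarith
    linarith
  refine ⟨Polynomial.C (((T ℝ (dd:ℤ)).eval x0)⁻¹) * ((T ℝ (dd:ℤ)).comp L), ?_, ?_, ?_, ?_⟩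
  · refine (Polynomial.natDegree_mul_le).trans ?_
    rw [Polynomial.natDegree_C]
    refine le_trans (by simpa using Polynomial.natDegree_comp_le (p := T ℝ (dd:ℤ)) (q := L)) ?_
    have h1 : L.natDegree ≤ 1 := by
      rw [hL]
      refine (Polynomial.natDegree_sub_le _ _).trans (max_le ?_ ?_)
      · simp
      · exact (Polynomial.natDegree_mul_le).trans (by simp)
    simpa using Nat.mul_le_mul_left dd h1
  · have h0 : L.eval 0 = x0 := by rw [hLeval]; ring
    simp [Polynomial.eval_comp, h0, inv_mul_cancel₀ hTx0pos.ne']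
  · intro u hu0 hun
    rw [Polynomial.eval_mul, Polynomial.eval_C, Polynomial.eval_comp, abs_mul,
      abs_inv, abs_of_pos hTx0pos]
    have habs : |(T ℝ (dd:ℤ)).eval (L.eval u)| ≤ (T ℝ (dd:ℤ)).eval x0 := by
      rcases le_or_gt (L.eval u) 1 with h | h
      · calc |(T ℝ (dd:ℤ)).eval (L.eval u)| ≤ 1 := abs_T_le_one ⟨hLlb u hun, h⟩ _
          _ ≤ (T ℝ (dd:ℤ)).eval x0 := T_eval_one_le hx0gt.le _
      · rw [abs_of_pos (lt_of_lt_of_le one_pos (T_eval_one_le h.le _))]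
        exact T_eval_mono h.le (hLub u hu0) _
    calc ((T ℝ (dd:ℤ)).eval x0)⁻¹ * |(T ℝ (dd:ℤ)).eval (L.eval u)|
        ≤ ((T ℝ (dd:ℤ)).eval x0)⁻¹ * ((T ℝ (dd:ℤ)).eval x0) :=
          mul_le_mul_of_nonneg_left habs (inv_nonneg.mpr hTx0pos.le)
      _ = 1 := inv_mul_cancel₀ hTx0pos.ne'
  · intro u hKu hun
    have hLu1 : L.eval u ≤ 1 := by
      rw [hLeval, hx0def, div_sub' hden.ne', div_le_one hden]
      have hco : ((n:ℝ)-K)*(2*u/((n:ℝ)-K)) = 2*u := by field_simp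
      linarith
    rw [Polynomial.eval_mul, Polynomial.eval_C, Polynomial.eval_comp, abs_mul,
      abs_inv, abs_of_pos hTx0pos]
    have habs : |(T ℝ (dd:ℤ)).eval (L.eval u)| ≤ 1 :=
      abs_T_le_one ⟨hLlb u hun, hLu1⟩ _
    set y : ℝ := 2 * Real.sqrt ((K:ℝ)/n) with hy
    have hy0 : 0 ≤ y := by positivity
    have hy2 : y ≤ 2 := by
      rw [hy]
      have h1 : Real.sqrt ((K:ℝ)/n) ≤ 1 := by
        rw [show (1:ℝ) = Real.sqrt 1 by simp]
        apply Real.sqrt_le_sqrt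
        rw [div_le_one hnpos]
        linarith
      linarith
    have hgrow : Real.exp ((dd:ℝ) * y / 3) / 2 ≤ (T ℝ (dd:ℤ)).eval x0 := by
      have h1 : Real.exp ((dd:ℝ) * y / 3) = (Real.exp (y/3))^dd := by
        rw [← Real.exp_nat_mul]; congr 1; ring
      have h2 : (Real.exp (y/3))^dd ≤ (1+y)^dd :=
        pow_le_pow_left₀ (Real.exp_pos _).le (log_one_add_ge hy0 hy2) dd
      have hyx : y ≤ Real.sqrt (x0^2 - 1) := by
        have hx2 : 2*μ ≤ x0^2 - 1 := by rw [hx0eq]; nlinarith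
        have hmuge : 2*(K:ℝ)/n ≤ μ := by
          rw [hmu]
          apply div_le_div_of_nonneg_left (by positivity) hden
          linarith
        have hysq : y^2 ≤ x0^2 - 1 := by
          have hsq : (Real.sqrt ((K:ℝ)/n))^2 = (K:ℝ)/n := Real.sq_sqrt (by positivity)
          have : y^2 = 4*((K:ℝ)/n) := by rw [hy, mul_pow, hsq]; ring
          rw [this]
          calc 4*((K:ℝ)/n) = 2*(2*(K:ℝ)/n) := by ring
            _ ≤ 2*μ := by linarith
            _ ≤ x0^2 - 1 := hx2
        calc y = Real.sqrt (y^2) := (Real.sqrt_sq hy0).symm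
          _ ≤ Real.sqrt (x0^2-1) := Real.sqrt_le_sqrt hysq
      have h3 : (1+y)^dd ≤ (x0 + Real.sqrt (x0^2-1))^dd :=
        pow_le_pow_left₀ (by linarith) (by linarith) dd
      have h6 := T_eval_ge hx0gt.le dd
      calc Real.exp ((dd:ℝ) * y / 3) / 2 = (Real.exp (y/3))^dd / 2 := by rw [h1]
        _ ≤ (1+y)^dd / 2 := by linarith
        _ ≤ (x0 + Real.sqrt (x0^2-1))^dd / 2 := by linarith
        _ ≤ (T ℝ (dd:ℤ)).eval x0 := h6
    have hinv : ((T ℝ (dd:ℤ)).eval x0)⁻¹ ≤ 2 * Real.exp (-((dd:ℝ) * y / 3)) := by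
      have hepos : (0:ℝ) < Real.exp ((dd:ℝ) * y / 3) / 2 := by positivity
      have := inv_anti₀ hepos hgrow
      calc ((T ℝ (dd:ℤ)).eval x0)⁻¹ ≤ (Real.exp ((dd:ℝ) * y / 3) / 2)⁻¹ := this
        _ = 2 * Real.exp (-((dd:ℝ) * y / 3)) := by
            rw [Real.exp_neg]; field_simp
    calc ((T ℝ (dd:ℤ)).eval x0)⁻¹ * |(T ℝ (dd:ℤ)).eval (L.eval u)|
        ≤ ((T ℝ (dd:ℤ)).eval x0)⁻¹ * 1 :=
          mul_le_mul_of_nonneg_left habs (inv_nonneg.mpr hTx0pos.le)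
      _ = ((T ℝ (dd:ℤ)).eval x0)⁻¹ := mul_one _
      _ ≤ 2 * Real.exp (-((dd:ℝ) * y / 3)) := hinv

lemma series_bound : ∀ i : ℕ, ((i:ℝ)+5) * ((Real.sqrt 2)⁻¹)^i ≤ 6 * (6/7)^i := by
  have hs2 : (1.414:ℝ) ≤ Real.sqrt 2 := by
    rw [show (1.414:ℝ) = Real.sqrt (1.414^2) from (Real.sqrt_sq (by norm_num)).symm]
    apply Real.sqrt_le_sqrt; norm_num
  have hs2pos : (0:ℝ) < Real.sqrt 2 := by linarith
  intro i
  induction i with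
  | zero => norm_num
  | succ i ih =>
    have key : ((i:ℝ)+1+5) * (Real.sqrt 2)⁻¹ ≤ ((i:ℝ)+5) * (6/7) := by
      have h7 : ((i:ℝ)+1+5) ≤ ((i:ℝ)+5)*(6/7)*Real.sqrt 2 := by
        nlinarith [Nat.cast_nonneg (α := ℝ) i, hs2]
      calc ((i:ℝ)+1+5) * (Real.sqrt 2)⁻¹ ≤ (((i:ℝ)+5)*(6/7)*Real.sqrt 2) * (Real.sqrt 2)⁻¹ :=
            mul_le_mul_of_nonneg_right h7 (inv_nonneg.mpr hs2pos.le)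
        _ = ((i:ℝ)+5)*(6/7) * (Real.sqrt 2 * (Real.sqrt 2)⁻¹) := by ring
        _ = ((i:ℝ)+5)*(6/7) := by rw [mul_inv_cancel₀ hs2pos.ne', mul_one]
    have hnn : (0:ℝ) ≤ ((Real.sqrt 2)⁻¹)^i := by positivity
    calc (((i+1:ℕ):ℝ)+5)*((Real.sqrt 2)⁻¹)^(i+1)
        = (((i:ℝ)+1+5) * (Real.sqrt 2)⁻¹) * ((Real.sqrt 2)⁻¹)^i := by push_cast; ring
      _ ≤ (((i:ℝ)+5) * (6/7)) * ((Real.sqrt 2)⁻¹)^i :=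
          mul_le_mul_of_nonneg_right key hnn
      _ = (6/7) * (((i:ℝ)+5) * ((Real.sqrt 2)⁻¹)^i) := by ring
      _ ≤ (6/7) * (6 * (6/7)^i) := mul_le_mul_of_nonneg_left ih (by norm_num)
      _ = 6 * (6/7)^(i+1) := by ring

lemma geom_bound : ∀ m : ℕ, ∑ i ∈ Finset.range m, ((6:ℝ)/7)^i ≤ 7 := by
  intro m
  induction m with
  | zero => simp
  | succ m ih =>
    rw [geom_sum_succ]
    nlinarith

lemma eval_prod_roots (a : ℕ) (u : ℝ) :
    (∏ j ∈ Finset.Icc 1 a, (1 - Polynomial.C (1/(j:ℝ)) * Polynomial.X)).eval u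
      = ∏ j ∈ Finset.Icc 1 a, (1 - u/(j:ℝ)) := by
  rw [Polynomial.eval_prod]
  apply Finset.prod_congr rfl
  intro j _
  simp [Polynomial.eval_sub, Polynomial.eval_mul]
  ring

lemma roots_deg (a : ℕ) :
    (∏ j ∈ Finset.Icc 1 a, (1 - Polynomial.C (1/(j:ℝ)) * Polynomial.X)).natDegree ≤ a := by
  refine (Polynomial.natDegree_prod_le _ _).trans ?_
  have h : ∀ j ∈ Finset.Icc 1 a,
      (1 - Polynomial.C (1/(j:ℝ)) * Polynomial.X).natDegree ≤ 1 := by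
    intro j _
    refine (Polynomial.natDegree_sub_le _ _).trans (max_le (by simp) ?_)
    exact (Polynomial.natDegree_mul_le).trans (by simp)
  refine le_trans (Finset.sum_le_sum h) ?_
  simp

lemma roots_vanish {a m : ℕ} (hm : 1 ≤ m) (hma : m ≤ a) :
    (∏ j ∈ Finset.Icc 1 a, (1 - Polynomial.C (1/(j:ℝ)) * Polynomial.X)).eval (m:ℝ) = 0 := by
  rw [eval_prod_roots]
  refine Finset.prod_eq_zero (Finset.mem_Icc.mpr ⟨hm, hma⟩) ?_
  have : (m:ℝ) ≠ 0 := by positivity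
  field_simp
  simp

lemma univ_poly (n : ℕ) (hn : 0 < n) (k : ℝ) (hk1 : 1 ≤ k) (hkn : k ≤ n) :
    ∃ R : Polynomial ℝ, ((R.natDegree : ℝ) ≤ 150 * Real.sqrt (n * k)) ∧ R.eval 0 = 1 ∧
      ∀ m : ℕ, 1 ≤ m → m ≤ n → |R.eval (m:ℝ)| ≤ (2:ℝ) ^ (-k) := by
  have hnR : (0:ℝ) < n := by exact_mod_cast hn
  have hkpos : (0:ℝ) < k := by linarith
  have hsqrtnk : (0:ℝ) < Real.sqrt (n*k) := Real.sqrt_pos.mpr (by positivity)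
  have hksqrt : k ≤ Real.sqrt (n*k) := by
    nlinarith [Real.sq_sqrt (by positivity : (0:ℝ) ≤ (n:ℝ)*k), Real.sqrt_nonneg ((n:ℝ)*k)]
  rcases le_or_gt (n:ℝ) (4*k) with hcase | hcase
  · -- case A : exact polynomial of degree n
    refine ⟨∏ j ∈ Finset.Icc 1 n, (1 - Polynomial.C (1/(j:ℝ)) * Polynomial.X), ?_, ?_, ?_⟩
    · have h1 : ((∏ j ∈ Finset.Icc 1 n, (1 - Polynomial.C (1/(j:ℝ)) * Polynomial.X)).natDegree : ℝ)
          ≤ (n:ℝ) := by exact_mod_cast roots_deg n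
      refine h1.trans ?_
      have h2 : (n:ℝ) ≤ 2 * Real.sqrt (n*k) := by
        nlinarith [Real.sq_sqrt (by positivity : (0:ℝ) ≤ (n:ℝ)*k), Real.sqrt_nonneg ((n:ℝ)*k)]
      nlinarith
    · rw [eval_prod_roots]
      refine Finset.prod_eq_one fun j _ => by simp
    · intro m hm1 hmn
      rw [roots_vanish hm1 hmn, abs_zero]
      positivity
  · -- case B
    set a := ⌈k⌉₊ with hadef
    have hka : k ≤ a := Nat.le_ceil k
    have ha1 : 1 ≤ a := by
      rw [hadef]
      exact_mod_cast Nat.one_le_ceil_iff.mpr hkpos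
    have ha2k : (a:ℝ) ≤ 2*k := by
      have := Nat.ceil_lt_add_one hkpos.le
      rw [hadef]; linarith
    have h2an : 2*a ≤ n := by
      have h1 : (2*a:ℝ) < n := by push_cast; linarith
      exact_mod_cast h1.le
    have h2apos : 0 < 2*a := by omega
    set J := Nat.log 2 (n / (2*a)) with hJdef
    have hdivpos : 0 < n / (2*a) := Nat.div_pos h2an h2apos
    have hJ1 : 2^J * (2*a) ≤ n := by
      have := Nat.pow_log_le_self 2 hdivpos.ne'
      rw [← hJdef] at this
      exact (Nat.le_div_iff_mul_le h2apos).mp this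
    have hJ2 : n < a * 2^(J+2) := by
      have h1 := Nat.lt_pow_succ_log_self (by norm_num : 1 < 2) (n / (2*a))
      rw [← hJdef] at h1
      have h2 : n < 2^(J+1) * (2*a) := (Nat.div_lt_iff_lt_mul h2apos).mp h1
      calc n < 2^(J+1) * (2*a) := h2
        _ = a * 2^(J+2) := by ring
    set Ki : ℕ → ℕ := fun i => a * 2^i with hKidef
    set d : ℕ → ℕ := fun i =>
      ⌈3 * (k + (a:ℝ)*((i:ℝ)+4) + 1) / (2 * Real.sqrt ((Ki i : ℝ)/n))⌉₊ with hddef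
    have hKin : ∀ i, i ≤ J → 2 * Ki i ≤ n := by
      intro i hi
      calc 2 * Ki i = 2 * a * 2^i := by rw [hKidef]; ring
        _ ≤ 2 * a * 2^J := by
            have := Nat.pow_le_pow_right (by norm_num : 1 ≤ 2) hi
            exact Nat.mul_le_mul_left _ this
        _ = 2^J * (2*a) := by ring
        _ ≤ n := hJ1
    have hFex : ∀ i : ℕ, ∃ F : Polynomial ℝ, (2 * Ki i ≤ n →
        (F.natDegree ≤ d i ∧ F.eval 0 = 1 ∧
          (∀ u : ℝ, 0 ≤ u → u ≤ (n:ℝ) → |F.eval u| ≤ 1) ∧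
          (∀ u : ℝ, (Ki i:ℝ) ≤ u → u ≤ (n:ℝ) →
            |F.eval u| ≤ 2 * Real.exp (-((d i:ℝ) * (2 * Real.sqrt ((Ki i:ℝ)/n)) / 3))))) := by
      intro i
      by_cases h : 2 * Ki i ≤ n
      · have hK1 : 1 ≤ Ki i := by
          rw [hKidef]
          exact Nat.one_le_iff_ne_zero.mpr (by positivity)
        obtain ⟨F, h1, h2, h3, h4⟩ := band n (Ki i) (d i) hK1 h
        exact ⟨F, fun _ => ⟨h1, h2, h3, h4⟩⟩
      · exact ⟨1, fun h' => absurd h' h⟩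
    choose F hF using hFex
    refine ⟨(∏ j ∈ Finset.Icc 1 a, (1 - Polynomial.C (1/(j:ℝ)) * Polynomial.X)) *
      ∏ i ∈ Finset.range (J+1), F i, ?_, ?_, ?_⟩
    · -- degree bound
      have hs2 : (1.414:ℝ) ≤ Real.sqrt 2 := by
        nlinarith [Real.sq_sqrt (by norm_num : (0:ℝ) ≤ 2), Real.sqrt_nonneg (2:ℝ)]
      have hs2pos : (0:ℝ) < Real.sqrt 2 := by linarith
      have hdeg1 : ((∏ j ∈ Finset.Icc 1 a, (1 - Polynomial.C (1/(j:ℝ)) * Polynomial.X)) *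
          ∏ i ∈ Finset.range (J+1), F i).natDegree ≤ a + ∑ i ∈ Finset.range (J+1), d i := by
        refine (Polynomial.natDegree_mul_le).trans ?_
        refine add_le_add (roots_deg a) ?_
        refine (Polynomial.natDegree_prod_le _ _).trans ?_
        refine Finset.sum_le_sum fun i hi => ?_
        exact (hF i (hKin i (by simp at hi; omega))).1
      have hdB : ∀ i : ℕ, ((d i : ℝ)) ≤ 18 * Real.sqrt ((n:ℝ)*k) * (6/7)^i + 1 := by
        intro i
        have hKpos : (0:ℝ) < (Ki i : ℝ) := by
          have h1 : 1 ≤ Ki i := Nat.one_le_iff_ne_zero.mpr (by rw [hKidef]; positivity)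
          exact_mod_cast h1
        have hsq : (0:ℝ) < Real.sqrt ((Ki i:ℝ)/n) := Real.sqrt_pos.mpr (by positivity)
        have hq0 : (0:ℝ) ≤ 3 * (k + (a:ℝ)*((i:ℝ)+4) + 1) / (2 * Real.sqrt ((Ki i : ℝ)/n)) := by
          positivity
        have hceil : (d i : ℝ) ≤
            3 * (k + (a:ℝ)*((i:ℝ)+4) + 1) / (2 * Real.sqrt ((Ki i : ℝ)/n)) + 1 := by
          rw [hddef]
          exact le_of_lt (Nat.ceil_lt_add_one hq0)
        have hKge : k * 2^i ≤ (Ki i : ℝ) := by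
          rw [hKidef]
          push_cast
          have h2 : (0:ℝ) ≤ (2:ℝ)^i := by positivity
          nlinarith
        -- q_i ≤ 3 √(nk) (i+5) ω^i
        have hmulsqrt : Real.sqrt ((n:ℝ)*k) * Real.sqrt ((Ki i:ℝ)/n) = Real.sqrt (k * Ki i) := by
          rw [← Real.sqrt_mul (by positivity)]
          congr 1
          field_simp
        have hsqrt2pow : Real.sqrt ((2:ℝ)^i) = (Real.sqrt 2)^i := by
          have h0 : ((Real.sqrt 2)^i)^2 = (2:ℝ)^i := by
            rw [← pow_mul, mul_comm, pow_mul, Real.sq_sqrt (by norm_num : (0:ℝ) ≤ 2)]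
          rw [← h0, Real.sqrt_sq (pow_nonneg (Real.sqrt_nonneg 2) i)]
        have hk2 : k * (Real.sqrt 2)^i ≤ Real.sqrt (k * Ki i) := by
          have h3 : Real.sqrt (k^2 * 2^i) ≤ Real.sqrt (k * Ki i) := by
            apply Real.sqrt_le_sqrt
            have : k^2 * 2^i = k * (k * 2^i) := by ring
            rw [this]
            exact mul_le_mul_of_nonneg_left hKge hkpos.le
          calc k * (Real.sqrt 2)^i = Real.sqrt (k^2) * Real.sqrt ((2:ℝ)^i) := by
                rw [Real.sqrt_sq hkpos.le, hsqrt2pow]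
            _ = Real.sqrt (k^2 * 2^i) := by rw [← Real.sqrt_mul (by positivity)]
            _ ≤ Real.sqrt (k * Ki i) := h3
        have hqB : 3 * (k + (a:ℝ)*((i:ℝ)+4) + 1) / (2 * Real.sqrt ((Ki i : ℝ)/n))
            ≤ 3 * Real.sqrt ((n:ℝ)*k) * (((i:ℝ)+5) * ((Real.sqrt 2)⁻¹)^i) := by
          rw [div_le_iff₀ (by positivity)]
          have hnum : 3 * (k + (a:ℝ)*((i:ℝ)+4) + 1) ≤ 6*k*((i:ℝ)+5) := by
            have hi0 : (0:ℝ) ≤ (i:ℝ) := Nat.cast_nonneg i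
            nlinarith
          have hrhs : 6*k*((i:ℝ)+5) ≤
              3 * Real.sqrt ((n:ℝ)*k) * (((i:ℝ)+5) * ((Real.sqrt 2)⁻¹)^i)
                * (2 * Real.sqrt ((Ki i:ℝ)/n)) := by
            have e1 : 3 * Real.sqrt ((n:ℝ)*k) * (((i:ℝ)+5) * ((Real.sqrt 2)⁻¹)^i)
                * (2 * Real.sqrt ((Ki i:ℝ)/n))
                = 6*((i:ℝ)+5) * ((Real.sqrt 2)⁻¹)^i * (Real.sqrt ((n:ℝ)*k) * Real.sqrt ((Ki i:ℝ)/n)) := by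
              ring
            rw [e1, hmulsqrt]
            have h5 : ((Real.sqrt 2)⁻¹)^i * (k * (Real.sqrt 2)^i)
                ≤ ((Real.sqrt 2)⁻¹)^i * Real.sqrt (k * Ki i) :=
              mul_le_mul_of_nonneg_left hk2 (by positivity)
            have h6 : ((Real.sqrt 2)⁻¹)^i * (k * (Real.sqrt 2)^i) = k := by
              rw [show ((Real.sqrt 2)⁻¹)^i * (k * (Real.sqrt 2)^i)
                  = k * (((Real.sqrt 2)⁻¹ * Real.sqrt 2)^i) by rw [mul_pow]; ring,
                inv_mul_cancel₀ hs2pos.ne', one_pow, mul_one]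
            have h7 : k ≤ ((Real.sqrt 2)⁻¹)^i * Real.sqrt (k * Ki i) := by
              calc k = ((Real.sqrt 2)⁻¹)^i * (k * (Real.sqrt 2)^i) := h6.symm
                _ ≤ ((Real.sqrt 2)⁻¹)^i * Real.sqrt (k * Ki i) := h5
            have hi5 : (0:ℝ) ≤ 6*((i:ℝ)+5) := by positivity
            calc 6*k*((i:ℝ)+5) = 6*((i:ℝ)+5) * k := by ring
              _ ≤ 6*((i:ℝ)+5) * (((Real.sqrt 2)⁻¹)^i * Real.sqrt (k * Ki i)) :=
                  mul_le_mul_of_nonneg_left h7 hi5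
              _ = 6*((i:ℝ)+5) * ((Real.sqrt 2)⁻¹)^i * Real.sqrt (k * Ki i) := by ring
          linarith
        have hser := series_bound i
        have h8 : 3 * Real.sqrt ((n:ℝ)*k) * (((i:ℝ)+5) * ((Real.sqrt 2)⁻¹)^i)
            ≤ 3 * Real.sqrt ((n:ℝ)*k) * (6 * (6/7)^i) :=
          mul_le_mul_of_nonneg_left hser (by positivity)
        calc (d i : ℝ) ≤ _ + 1 := hceil
          _ ≤ 3 * Real.sqrt ((n:ℝ)*k) * (((i:ℝ)+5) * ((Real.sqrt 2)⁻¹)^i) + 1 := by linarith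
          _ ≤ 3 * Real.sqrt ((n:ℝ)*k) * (6 * (6/7)^i) + 1 := by linarith
          _ = 18 * Real.sqrt ((n:ℝ)*k) * (6/7)^i + 1 := by ring
      have hsum : (∑ i ∈ Finset.range (J+1), (d i:ℝ)) ≤
          126 * Real.sqrt ((n:ℝ)*k) + (J+1) := by
        calc (∑ i ∈ Finset.range (J+1), (d i:ℝ))
            ≤ ∑ i ∈ Finset.range (J+1), (18 * Real.sqrt ((n:ℝ)*k) * (6/7)^i + 1) :=
              Finset.sum_le_sum fun i _ => hdB i
          _ = 18 * Real.sqrt ((n:ℝ)*k) * (∑ i ∈ Finset.range (J+1), ((6:ℝ)/7)^i) + (J+1) := by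
              rw [Finset.sum_add_distrib, ← Finset.mul_sum]
              simp
          _ ≤ 18 * Real.sqrt ((n:ℝ)*k) * 7 + (J+1) := by
              have := geom_bound (J+1)
              have h9 : (0:ℝ) ≤ 18 * Real.sqrt ((n:ℝ)*k) := by positivity
              nlinarith
          _ = 126 * Real.sqrt ((n:ℝ)*k) + (J+1) := by ring
      have hJb : ((J:ℝ)+1) ≤ 2.5 * Real.sqrt ((n:ℝ)*k) := by
        have hp1 : (2:ℕ)^(J+1) ≤ n := by
          calc (2:ℕ)^(J+1) = 2^J * 2 := by ring
            _ ≤ 2^J * (2*a) := by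
                apply Nat.mul_le_mul_left
                omega
            _ ≤ n := hJ1
        have hp2 : ((2:ℝ))^(J+1) ≤ (n:ℝ) := by exact_mod_cast hp1
        have hsqrt2powJ : Real.sqrt ((2:ℝ)^(J+1)) = (Real.sqrt 2)^(J+1) := by
          have h0 : ((Real.sqrt 2)^(J+1))^2 = (2:ℝ)^(J+1) := by
            rw [← pow_mul, mul_comm, pow_mul, Real.sq_sqrt (by norm_num : (0:ℝ) ≤ 2)]
          rw [← h0, Real.sqrt_sq (pow_nonneg (Real.sqrt_nonneg 2) (J+1))]
        have hsn : (Real.sqrt 2)^(J+1) ≤ Real.sqrt (n:ℝ) := by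
          rw [← hsqrt2powJ]
          exact Real.sqrt_le_sqrt hp2
        have hbern : 1 + ((J:ℝ)+1) * (Real.sqrt 2 - 1) ≤ (Real.sqrt 2)^(J+1) := by
          have hb := one_add_mul_le_pow (a := Real.sqrt 2 - 1) (by linarith) (J+1)
          have e : (1 + (Real.sqrt 2 - 1)) = Real.sqrt 2 := by ring
          rw [e] at hb
          have e2 : ((J+1 : ℕ):ℝ) = (J:ℝ)+1 := by push_cast; ring
          rw [e2] at hb
          exact hb
        have hnn : Real.sqrt (n:ℝ) ≤ Real.sqrt ((n:ℝ)*k) := by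
          apply Real.sqrt_le_sqrt
          nlinarith
        have hJ0 : (0:ℝ) ≤ (J:ℝ) := Nat.cast_nonneg J
        have e3 : ((J:ℝ)+1)*(Real.sqrt 2 - 1) ≤ Real.sqrt ((n:ℝ)*k) - 1 := by
          have := hbern.trans (hsn.trans hnn)
          linarith
        have e4 : 0.414*((J:ℝ)+1) ≤ ((J:ℝ)+1)*(Real.sqrt 2 - 1) := by nlinarith
        linarith
      have hcast : (((∏ j ∈ Finset.Icc 1 a, (1 - Polynomial.C (1/(j:ℝ)) * Polynomial.X)) *
          ∏ i ∈ Finset.range (J+1), F i).natDegree : ℝ)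
          ≤ (a:ℝ) + ∑ i ∈ Finset.range (J+1), (d i:ℝ) := by
        have := hdeg1
        have h10 : (((∏ j ∈ Finset.Icc 1 a, (1 - Polynomial.C (1/(j:ℝ)) * Polynomial.X)) *
            ∏ i ∈ Finset.range (J+1), F i).natDegree : ℝ)
            ≤ ((a + ∑ i ∈ Finset.range (J+1), d i : ℕ) : ℝ) := by exact_mod_cast this
        refine h10.trans (le_of_eq ?_)
        push_cast
        ring
      have ha2s : (a:ℝ) ≤ 2 * Real.sqrt ((n:ℝ)*k) := by linarith
      calc (((∏ j ∈ Finset.Icc 1 a, (1 - Polynomial.C (1/(j:ℝ)) * Polynomial.X)) *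
            ∏ i ∈ Finset.range (J+1), F i).natDegree : ℝ)
          ≤ (a:ℝ) + ∑ i ∈ Finset.range (J+1), (d i:ℝ) := hcast
        _ ≤ 2 * Real.sqrt ((n:ℝ)*k) + (126 * Real.sqrt ((n:ℝ)*k) + ((J:ℝ)+1)) := by
            have := hsum
            push_cast at this ⊢
            linarith
        _ ≤ 150 * Real.sqrt ((n:ℝ)*k) := by linarith
    · -- eval at 0
      rw [Polynomial.eval_mul, eval_prod_roots, Polynomial.eval_prod]
      have h1 : ∏ j ∈ Finset.Icc 1 a, (1 - (0:ℝ)/(j:ℝ)) = 1 :=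
        Finset.prod_eq_one fun j _ => by simp
      have h2 : ∏ i ∈ Finset.range (J+1), (F i).eval 0 = 1 := by
        refine Finset.prod_eq_one fun i hi => ?_
        exact (hF i (hKin i (by simp at hi; omega))).2.1
      rw [h1, h2, one_mul]
    · -- error bound
      intro m hm1 hmn
      have hrpos : (0:ℝ) < (2:ℝ) ^ (-k) := Real.rpow_pos_of_pos (by norm_num) _
      rcases le_or_gt m a with hma | hma
      · rw [Polynomial.eval_mul, roots_vanish hm1 hma, zero_mul, abs_zero]
        exact hrpos.le
      obtain ⟨i, hiJ, hKm, hm4⟩ : ∃ i, i ≤ J ∧ Ki i ≤ m ∧ m < a * 2^(i+2) := by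
        set L0 := Nat.log 2 (m / a) with hL0
        have hdiv : 0 < m / a := Nat.div_pos (le_of_lt hma) (by omega)
        have hL0a : 2^L0 * a ≤ m := by
          have h1 := Nat.pow_log_le_self 2 hdiv.ne'
          rw [← hL0] at h1
          exact (Nat.le_div_iff_mul_le (by omega)).mp h1
        rcases le_or_gt L0 J with h | h
        · refine ⟨L0, h, by rw [hKidef]; simpa [mul_comm] using hL0a, ?_⟩
          have h1 := Nat.lt_pow_succ_log_self (by norm_num : 1 < 2) (m/a)
          rw [← hL0] at h1
          have h2 : m < 2^(L0+1)*a := (Nat.div_lt_iff_lt_mul (by omega)).mp h1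
          have h3 : (2:ℕ)^(L0+1) ≤ 2^(L0+2) := Nat.pow_le_pow_right (by norm_num) (by omega)
          calc m < 2^(L0+1)*a := h2
            _ ≤ 2^(L0+2)*a := Nat.mul_le_mul_right a h3
            _ = a * 2^(L0+2) := by ring
        · refine ⟨J, le_refl J, ?_, lt_of_le_of_lt hmn hJ2⟩
          have h3 : (2:ℕ)^J ≤ 2^L0 := Nat.pow_le_pow_right (by norm_num) h.le
          rw [hKidef]
          calc a * 2^J ≤ a * 2^L0 := Nat.mul_le_mul_left a h3
            _ = 2^L0 * a := by ring
            _ ≤ m := hL0a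
      have hcond := hKin i hiJ
      have hFi := hF i hcond
      have hmnR : (m:ℝ) ≤ (n:ℝ) := by exact_mod_cast hmn
      have hKmR : ((Ki i):ℝ) ≤ (m:ℝ) := by exact_mod_cast hKm
      have hm4R : (m:ℝ) ≤ (a:ℝ) * 2^(i+2) := by
        have : (m:ℝ) < ((a * 2^(i+2) : ℕ):ℝ) := by exact_mod_cast hm4
        push_cast at this
        linarith
      have hfacpos : (0:ℝ) < (a.factorial : ℝ) := by
        exact_mod_cast a.factorial_pos
      have hmRpos : (0:ℝ) < (m:ℝ) := by
        have : (1:ℝ) ≤ (m:ℝ) := by exact_mod_cast hm1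
        linarith
      rw [Polynomial.eval_mul, abs_mul]
      -- bound on the root product
      have hP1 : |(∏ j ∈ Finset.Icc 1 a, (1 - Polynomial.C (1/(j:ℝ)) * Polynomial.X)).eval (m:ℝ)|
          ≤ (m:ℝ)^a / (a.factorial : ℝ) := by
        rw [eval_prod_roots, Finset.abs_prod]
        have heach : ∀ j ∈ Finset.Icc 1 a, |1 - (m:ℝ)/(j:ℝ)| ≤ (m:ℝ)/(j:ℝ) := by
          intro j hj
          obtain ⟨hj1, hj2⟩ := Finset.mem_Icc.mp hj
          have hjR : (1:ℝ) ≤ (j:ℝ) := by exact_mod_cast hj1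
          have hjm : (j:ℝ) ≤ (m:ℝ) := by
            have : j ≤ m := by omega
            exact_mod_cast this
          have h1 : 1 ≤ (m:ℝ)/(j:ℝ) := (one_le_div (by linarith)).mpr hjm
          rw [abs_of_nonpos (by linarith)]
          linarith
        refine (Finset.prod_le_prod (fun j _ => abs_nonneg _) heach).trans ?_
        rw [Finset.prod_div_distrib, Finset.prod_const, Nat.card_Icc]
        have hprodid : (∏ j ∈ Finset.Icc 1 a, (j:ℝ)) = (a.factorial : ℝ) := by
          rw [← Nat.cast_prod]
          congr 1
          rw [← Finset.prod_Ico_id_eq_factorial a, ← Finset.Ico_add_one_right_eq_Icc]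
        rw [hprodid]
        simp
      -- bound on the band product
      set y : ℝ := 2 * Real.sqrt (((Ki i):ℝ)/n) with hydef
      have hKipos : (0:ℝ) < ((Ki i):ℝ) := by
        have h1 : 1 ≤ Ki i := Nat.one_le_iff_ne_zero.mpr (by rw [hKidef]; positivity)
        exact_mod_cast h1
      have hypos : (0:ℝ) < y := by
        rw [hydef]
        have := Real.sqrt_pos.mpr (show (0:ℝ) < ((Ki i):ℝ)/n by positivity)
        linarith
      have hProd : |(∏ i' ∈ Finset.range (J+1), F i').eval (m:ℝ)|
          ≤ 2 * Real.exp (-((d i:ℝ) * y / 3)) := by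
        rw [Polynomial.eval_prod, Finset.abs_prod]
        have hmem : i ∈ Finset.range (J+1) := Finset.mem_range.mpr (by omega)
        rw [← Finset.mul_prod_erase (Finset.range (J+1)) _ hmem]
        have herase : (∏ i' ∈ (Finset.range (J+1)).erase i, |(F i').eval (m:ℝ)|) ≤ 1 := by
          refine Finset.prod_le_one (fun _ _ => abs_nonneg _) ?_
          intro i' hi'
          have hi'J : i' ≤ J := by
            have := Finset.mem_range.mp (Finset.mem_of_mem_erase hi')
            omega
          exact (hF i' (hKin i' hi'J)).2.2.1 (m:ℝ) (by positivity) hmnR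
        have hFim : |(F i).eval (m:ℝ)| ≤ 2 * Real.exp (-((d i:ℝ) * y / 3)) :=
          hFi.2.2.2 (m:ℝ) hKmR hmnR
        calc |(F i).eval (m:ℝ)| * ∏ i' ∈ (Finset.range (J+1)).erase i, |(F i').eval (m:ℝ)|
            ≤ |(F i).eval (m:ℝ)| * 1 :=
              mul_le_mul_of_nonneg_left herase (abs_nonneg _)
          _ = |(F i).eval (m:ℝ)| := mul_one _
          _ ≤ 2 * Real.exp (-((d i:ℝ) * y / 3)) := hFim
      -- numeric conclusion
      set A : ℝ := (a:ℝ) * ((i:ℝ)+4) with hAdef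
      have hA0 : 0 ≤ A := by positivity
      have hz : k + A + 1 ≤ (d i:ℝ) * y / 3 := by
        have hceil := Nat.le_ceil (3 * (k + (a:ℝ)*((i:ℝ)+4) + 1) / (2 * Real.sqrt (((Ki i):ℝ)/n)))
        have hdi : 3 * (k + A + 1) / y ≤ (d i:ℝ) := by
          rw [hddef, hAdef, hydef]
          exact_mod_cast hceil
        have h2 : 3 * (k + A + 1) ≤ (d i:ℝ) * y := by
          rw [div_le_iff₀ hypos] at hdi
          linarith
        linarith
      have hexp : Real.exp (-((d i:ℝ) * y / 3)) ≤ (2:ℝ) ^ (-(k + A + 1)) := by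
        rw [Real.rpow_def_of_pos (by norm_num : (0:ℝ) < 2)]
        apply Real.exp_le_exp.mpr
        have hlog2 : Real.log 2 ≤ 1 := by
          have := Real.log_le_sub_one_of_pos (by norm_num : (0:ℝ) < 2)
          linarith
        have hlog2' : 0 ≤ Real.log 2 := Real.log_nonneg (by norm_num)
        have hka1 : 0 ≤ k + A + 1 := by linarith
        calc -((d i:ℝ) * y / 3) ≤ -(k + A + 1) := by linarith
          _ ≤ Real.log 2 * (-(k + A + 1)) := by nlinarith
      have hm2A : (m:ℝ)^a / (a.factorial : ℝ) ≤ (2:ℝ) ^ A := by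
        rw [div_le_iff₀ hfacpos]
        have h1 : (m:ℝ)^a ≤ ((a:ℝ) * 2^(i+2))^a :=
          pow_le_pow_left₀ hmRpos.le hm4R a
        have h2 : ((a:ℝ) * 2^(i+2))^a = (a:ℝ)^a * ((2:ℝ)^(i+2))^a := mul_pow _ _ _
        have h3 : (a:ℝ)^a ≤ (a.factorial : ℝ) * Real.exp a := fact_lb a
        have h4 : Real.exp (a:ℝ) ≤ (4:ℝ)^a := exp_nat_le a
        have h5 : (m:ℝ)^a ≤ (a.factorial : ℝ) * ((4:ℝ)^a * ((2:ℝ)^(i+2))^a) := by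
          calc (m:ℝ)^a ≤ (a:ℝ)^a * ((2:ℝ)^(i+2))^a := by rw [← h2]; exact h1
            _ ≤ ((a.factorial : ℝ) * Real.exp a) * ((2:ℝ)^(i+2))^a := by
                apply mul_le_mul_of_nonneg_right h3 (by positivity)
            _ ≤ ((a.factorial : ℝ) * (4:ℝ)^a) * ((2:ℝ)^(i+2))^a := by
                apply mul_le_mul_of_nonneg_right ?_ (by positivity)
                exact mul_le_mul_of_nonneg_left h4 hfacpos.le
            _ = (a.factorial : ℝ) * ((4:ℝ)^a * ((2:ℝ)^(i+2))^a) := by ring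
        have h6 : (4:ℝ)^a * ((2:ℝ)^(i+2))^a = (2:ℝ)^((i+4)*a) := by
          rw [show (4:ℝ) = 2^2 by norm_num, ← pow_mul, ← pow_mul, ← pow_add]
          congr 1
          ring
        have h7 : (2:ℝ)^((i+4)*a) = (2:ℝ) ^ A := by
          rw [← Real.rpow_natCast 2 ((i+4)*a)]
          congr 1
          rw [hAdef]
          push_cast
          ring
        calc (m:ℝ)^a ≤ (a.factorial : ℝ) * ((4:ℝ)^a * ((2:ℝ)^(i+2))^a) := h5
          _ = (2:ℝ)^((i+4)*a) * (a.factorial : ℝ) := by rw [h6]; ring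
          _ = (2:ℝ)^A * (a.factorial : ℝ) := by rw [h7]
      have hfinal : ((m:ℝ)^a / (a.factorial : ℝ)) * (2 * Real.exp (-((d i:ℝ) * y / 3)))
          ≤ (2:ℝ) ^ (-k) := by
        have hstep : ((m:ℝ)^a / (a.factorial : ℝ)) * (2 * Real.exp (-((d i:ℝ) * y / 3)))
            ≤ (2:ℝ)^A * (2 * (2:ℝ) ^ (-(k + A + 1))) := by
          have hnn1 : (0:ℝ) ≤ (m:ℝ)^a / (a.factorial : ℝ) := by positivity
          have hnn2 : (0:ℝ) ≤ 2 * (2:ℝ) ^ (-(k + A + 1)) := by positivity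
          apply mul_le_mul hm2A ?_ (by positivity) (by positivity)
          have := mul_le_mul_of_nonneg_left hexp (by norm_num : (0:ℝ) ≤ 2)
          exact this
        refine hstep.trans (le_of_eq ?_)
        have e1 : (2:ℝ)^A * (2:ℝ)^(-(k+A+1)) = (2:ℝ)^(-(k+1)) := by
          rw [← Real.rpow_add (by norm_num : (0:ℝ) < 2)]
          congr 1; ring
        have e3 : (2:ℝ) * (2:ℝ)^(-(k+1)) = (2:ℝ)^(-k) := by
          rw [show -k = 1 + -(k+1) by ring, Real.rpow_add (by norm_num : (0:ℝ) < 2),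
            Real.rpow_one]
        calc (2:ℝ)^A * (2 * (2:ℝ)^(-(k+A+1))) = 2 * ((2:ℝ)^A * (2:ℝ)^(-(k+A+1))) := by ring
          _ = 2 * (2:ℝ)^(-(k+1)) := by rw [e1]
          _ = (2:ℝ)^(-k) := e3
      calc |(∏ j ∈ Finset.Icc 1 a, (1 - Polynomial.C (1/(j:ℝ)) * Polynomial.X)).eval (m:ℝ)| *
            |(∏ i' ∈ Finset.range (J+1), F i').eval (m:ℝ)|
          ≤ ((m:ℝ)^a / (a.factorial : ℝ)) * (2 * Real.exp (-((d i:ℝ) * y / 3))) := by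
            apply mul_le_mul hP1 hProd (abs_nonneg _) (by positivity)
        _ ≤ (2:ℝ) ^ (-k) := hfinal


end Univ
theorem and_approx :
    ∃ C : ℝ, 0 < C ∧ ∀ n : ℕ, 0 < n → ∀ s : ℝ, Real.sqrt n ≤ s → s ≤ n →
      ∃ P : MvPolynomial (Fin n) ℝ,
        (P.totalDegree : ℝ) ≤ C * s ∧ (∀ i, P.degreeOf i ≤ 1) ∧
        ∀ x : Fin n → ℝ, (∀ i, x i = 0 ∨ x i = 1) →
          |MvPolynomial.eval x P - (if ∀ i, x i = 1 then (1 : ℝ) else 0)| ≤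
            (2 : ℝ) ^ (-(s ^ 2 / n)) := by
  classical
  refine ⟨150, by norm_num, ?_⟩
  intro n hn s hs1 hs2
  have hnR : (0:ℝ) < n := by exact_mod_cast hn
  have hsqn : Real.sqrt n > 0 := Real.sqrt_pos.mpr hnR
  have hs0 : 0 < s := lt_of_lt_of_le hsqn hs1
  set k := s^2 / n with hk
  have hsqsq : (Real.sqrt (n:ℝ))^2 = (n:ℝ) := Real.sq_sqrt hnR.le
  have hk1 : 1 ≤ k := by
    rw [hk, le_div_iff₀ hnR]
    nlinarith [Real.sqrt_nonneg (n:ℝ)]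
  have hkn : k ≤ n := by
    rw [hk, div_le_iff₀ hnR]
    nlinarith
  obtain ⟨R, hRdeg, hR0, hRerr⟩ := Univ.univ_poly n hn k hk1 hkn
  have hsqnk : Real.sqrt ((n:ℝ)*k) = s := by
    rw [hk, show (n:ℝ)*(s^2/n) = s^2 by field_simp]
    exact Real.sqrt_sq hs0.le
  set Q := R.comp (Polynomial.C (n:ℝ) - Polynomial.X) with hQdef
  have hQdeg : Q.natDegree ≤ R.natDegree := by
    rw [hQdef]
    refine Polynomial.natDegree_comp_le.trans ?_
    have h1 : (Polynomial.C (n:ℝ) - Polynomial.X).natDegree ≤ 1 := by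
      refine (Polynomial.natDegree_sub_le _ _).trans (max_le (by simp) (by simp))
    calc R.natDegree * (Polynomial.C (n:ℝ) - Polynomial.X).natDegree
        ≤ R.natDegree * 1 := Nat.mul_le_mul_left _ h1
      _ = R.natDegree := mul_one _
  obtain ⟨P, hPdeg, hPdegOf, hPeval⟩ := AndApprox2.multilin n Q.natDegree Q le_rfl
  refine ⟨P, ?_, hPdegOf, ?_⟩
  · calc (P.totalDegree : ℝ) ≤ (Q.natDegree : ℝ) := by exact_mod_cast hPdeg
      _ ≤ (R.natDegree : ℝ) := by exact_mod_cast hQdeg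
      _ ≤ 150 * Real.sqrt ((n:ℝ)*k) := hRdeg
      _ = 150 * s := by rw [hsqnk]
  · intro x hx
    rw [hPeval x hx]
    set m := (Finset.univ.filter (fun i => x i = 1)).card with hm
    have hQm : Q.eval (m:ℝ) = R.eval ((n:ℝ) - m) := by
      rw [hQdef, Polynomial.eval_comp]
      simp
    by_cases hall : ∀ i, x i = 1
    · have hmn : m = n := by
        rw [hm, Finset.filter_true_of_mem (fun i _ => hall i), Finset.card_univ,
          Fintype.card_fin]
      rw [if_pos hall, hQm, hmn, sub_self, hR0, sub_self, abs_zero]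
      positivity
    · rw [if_neg hall, sub_zero]
      have hmlt : m < n := by
        obtain ⟨i0, hi0⟩ := not_forall.mp hall
        have hss : (Finset.univ.filter (fun i => x i = 1)) ⊂ Finset.univ := by
          refine Finset.ssubset_iff_of_subset (Finset.subset_univ _) |>.mpr ?_
          exact ⟨i0, Finset.mem_univ _, by simp [hi0]⟩
        have := Finset.card_lt_card hss
        rw [Finset.card_univ, Fintype.card_fin] at this
        exact this
      have hcast : ((n - m : ℕ):ℝ) = (n:ℝ) - m := by
        rw [Nat.cast_sub hmlt.le]
      calc |Q.eval (m:ℝ)| = |R.eval (((n - m : ℕ)):ℝ)| := by rw [hQm, hcast]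
        _ ≤ (2:ℝ) ^ (-k) := hRerr (n - m) (by omega) (by omega)
end
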